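/- arXiv:1806.09874 — 4 statements merged into one kernel-verified Lean document; each statement's English description precedes it below -/
import Mathlib

section
/- Let f = g/h be a meromorphic modular form of even weight k for SL(2,ℤ) such that h(it) ≠ 0 for every t > 0, and suppose f is regular at the cusp: there exist T > 0 and c : ℕ → ℂ such that h(τ) ≠ 0 and f(τ) = Σ_{n≥0} c(n) e^{2πinτ} for all τ with Im τ > T. For B > 0 and s ∈ ℂ∖{0, k} define L*(s, B) := −c(0)·(B^s/s + i^k B^{s−k}/(k−s)) + ∫_B^∞ t^{s−1}(f(it) − c(0)) dt + i^k ∫_{1/B}^∞ t^{k−s−1}(f(it) − c(0)) dt. Then both integrals converge absolutely for every s ∈ ℂ, the value L*(s, B) does not depend on the choice of B > 0, and the functional equation L*(s, B) = i^k L*(k − s, 1/B) holds for all s ∈ ℂ∖{0, k}. -/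
open Complex Real Filter Topology MeasureTheory

/-- A level-one holomorphic modular form of weight `k`: holomorphic on the upper
half-plane, 1-periodic, with the weight-`k` transformation under `τ ↦ -1/τ`,
and bounded as `Im τ → ∞`. -/
def IsModularForm (k : ℤ) (f : ℂ → ℂ) : Prop :=
  DifferentiableOn ℂ f {z : ℂ | 0 < z.im} ∧
  (∀ z : ℂ, 0 < z.im → f (z + 1) = f z) ∧
  (∀ z : ℂ, 0 < z.im → f (-z⁻¹) = z ^ k * f z) ∧
  ∃ C A : ℝ, ∀ z : ℂ, A < z.im → ‖f z‖ ≤ C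

/-- The regularized L-integral `L*(s, B)` of `f` with constant term `c0` and
weight `k`, split at the reflection point `B`. -/
noncomputable def Lstar (f : ℂ → ℂ) (c0 : ℂ) (k : ℤ) (B : ℝ) (s : ℂ) : ℂ :=
  -c0 * ((B : ℂ) ^ s / s + I ^ k * (B : ℂ) ^ (s - (k : ℂ)) / ((k : ℂ) - s))
    + (∫ t in Set.Ioi B, (t : ℂ) ^ (s - 1) * (f (t * I) - c0))
    + I ^ k * ∫ t in Set.Ioi (1 / B), (t : ℂ) ^ ((k : ℂ) - s - 1) * (f (t * I) - c0)

open Set intervalIntegral Asymptotics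

-- generic integrability lemma
lemma aux_integrable {F : ℝ → ℂ} (hc : ContinuousOn F (Set.Ioi 0))
    (M T₀ : ℝ) (hdec : ∀ t : ℝ, T₀ ≤ t → ‖F t‖ ≤ M * Real.exp (-(2*π)*t))
    (w : ℂ) {B : ℝ} (hB : 0 < B) :
    IntegrableOn (fun t : ℝ => (t:ℂ) ^ w * F t) (Set.Ioi B) := by
  have hsub : Set.Ici B ⊆ Set.Ioi (0:ℝ) := fun x hx => lt_of_lt_of_le hB hx
  have hcw : ContinuousOn (fun t : ℝ => (t:ℂ) ^ w) (Set.Ici B) := by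
    apply ContinuousOn.cpow Complex.continuous_ofReal.continuousOn continuousOn_const
    intro x hx
    exact Complex.ofReal_mem_slitPlane.2 (lt_of_lt_of_le hB hx)
  have hcont : ContinuousOn (fun t : ℝ => (t:ℂ) ^ w * F t) (Set.Ici B) :=
    hcw.mul (hc.mono hsub)
  rw [← integrableOn_Ici_iff_integrableOn_Ioi]
  refine (hcont.locallyIntegrableOn measurableSet_Ici).integrableOn_of_isBigO_atTop
    ?_ ⟨Set.Ioi 0, Ioi_mem_atTop 0, exp_neg_integrableOn_Ioi 0 one_pos⟩
  -- BigO part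
  have h1 : Tendsto (fun t:ℝ => t ^ w.re * Real.exp (-(2*π - 1) * t)) atTop (𝓝 0) :=
    tendsto_rpow_mul_exp_neg_mul_atTop_nhds_zero _ _ (by nlinarith [Real.pi_gt_three])
  have h2 : (fun t:ℝ => t ^ w.re * Real.exp (-(2*π)*t)) =O[atTop]
      (fun x:ℝ => Real.exp (-1*x)) := by
    have h3 := (h1.isBigO_one ℝ).mul (isBigO_refl (fun x:ℝ => Real.exp (-1*x)) atTop)
    refine h3.congr (fun x => ?_) (fun x => one_mul _)
    rw [mul_assoc, ← Real.exp_add]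
    ring_nf
  refine (IsBigO.of_bound M ?_).trans h2
  filter_upwards [eventually_ge_atTop (max T₀ (max B 1))] with t ht
  have ht1 : (1:ℝ) ≤ t := le_trans (le_max_of_le_right (le_max_right _ _)) ht
  have ht0 : (0:ℝ) < t := lt_of_lt_of_le one_pos ht1
  have hT0 : T₀ ≤ t := le_trans (le_max_left _ _) ht
  rw [norm_mul, Complex.norm_cpow_eq_rpow_re_of_pos ht0]
  have hb := hdec t hT0
  have hnn : (0:ℝ) ≤ t ^ w.re := Real.rpow_nonneg ht0.le _
  calc t ^ w.re * ‖F t‖ ≤ t ^ w.re * (M * Real.exp (-(2*π)*t)) :=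
        mul_le_mul_of_nonneg_left hb hnn
    _ = M * (t ^ w.re * Real.exp (-(2*π)*t)) := by ring
    _ ≤ M * ‖t ^ w.re * Real.exp (-(2*π)*t)‖ := by
        rw [Real.norm_of_nonneg (by positivity)]


lemma aux_decay (f : ℂ → ℂ) (T : ℝ) (c : ℕ → ℂ)
    (hcusp : ∀ τ : ℂ, T < τ.im →
      Summable (fun n : ℕ => ‖c n * Complex.exp (2 * π * I * n * τ)‖) ∧
      f τ = ∑' n : ℕ, c n * Complex.exp (2 * π * I * n * τ)) :
    ∃ M : ℝ, ∀ t : ℝ, T + 1 ≤ t → ‖f ((t:ℂ) * I) - c 0‖ ≤ M * Real.exp (-(2*π)*t) := by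
  set t₀ : ℝ := T + 1 with ht₀
  have him : ∀ t : ℝ, ((t:ℂ) * I).im = t := by intro t; simp
  have hnorm : ∀ (n : ℕ) (t : ℝ),
      ‖c n * Complex.exp (2*π*I*n*((t:ℂ)*I))‖ = ‖c n‖ * Real.exp (-(2*π*n*t)) := by
    intro n t
    rw [norm_mul]
    congr 1
    rw [Complex.norm_exp]
    congr 1
    have h : (2*π*I*(n:ℂ)*((t:ℂ)*I)) = ((-(2*π*n*t):ℝ):ℂ) := by
      have : (2*π*I*(n:ℂ)*((t:ℂ)*I)) = ((2*π*n*t : ℝ):ℂ) * (I*I) := by push_cast; ring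
      rw [this, Complex.I_mul_I]; push_cast; ring
    rw [h, Complex.ofReal_re]
  have hb := (hcusp ((t₀:ℂ)*I) (by rw [him]; linarith)).1
  have hbs : Summable (fun n : ℕ => ‖c (n+1)‖ * Real.exp (-(2*π*(n+1)*t₀))) := by
    have := hb.comp_injective (Nat.succ_injective)
    refine this.congr fun n => ?_
    simp only [Function.comp]
    rw [hnorm]
    simp only [Nat.succ_eq_add_one, Nat.cast_add, Nat.cast_one]
  refine ⟨(∑' n : ℕ, ‖c (n+1)‖ * Real.exp (-(2*π*(n+1)*t₀))) * Real.exp ((2*π)*t₀),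
    fun t ht => ?_⟩
  have hmem := hcusp ((t:ℂ)*I) (by rw [him]; linarith)
  have hsum : Summable (fun n : ℕ => c n * Complex.exp (2*π*I*n*((t:ℂ)*I))) :=
    hmem.1.of_norm
  have heq := hmem.2
  rw [Summable.tsum_eq_zero_add hsum] at heq
  have h0 : c 0 * Complex.exp (2*π*I*(0:ℕ)*((t:ℂ)*I)) = c 0 := by simp
  rw [h0] at heq
  have hfc : f ((t:ℂ)*I) - c 0 = ∑' n : ℕ, c (n+1) * Complex.exp (2*π*I*(n+1)*((t:ℂ)*I)) := by
    rw [heq]; simp only [Nat.cast_add, Nat.cast_one]; ring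
  rw [hfc]
  have hsum' : Summable (fun n : ℕ => ‖c (n+1) * Complex.exp (2*π*I*((n:ℂ)+1)*((t:ℂ)*I))‖) := by
    have := hmem.1.comp_injective (Nat.succ_injective)
    refine this.congr fun n => ?_
    simp only [Function.comp, Nat.succ_eq_add_one, Nat.cast_add, Nat.cast_one]
  refine le_trans (norm_tsum_le_tsum_norm ?_) ?_
  · exact hsum'
  have hterm : ∀ n : ℕ, ‖c (n+1) * Complex.exp (2*π*I*((n:ℕ)+1:ℂ)*((t:ℂ)*I))‖ ≤
      (‖c (n+1)‖ * Real.exp (-(2*π*(n+1)*t₀))) * (Real.exp ((2*π)*t₀) * Real.exp (-(2*π)*t)) := by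
    intro n
    have h1 : ((2:ℂ)*π*I*((n:ℂ)+1)*((t:ℂ)*I)) = (2*π*I*((n+1:ℕ):ℂ)*((t:ℂ)*I)) := by push_cast; ring
    rw [h1, hnorm]
    rw [← Real.exp_add, mul_assoc (‖c (n+1)‖), ← Real.exp_add]
    refine mul_le_mul_of_nonneg_left (Real.exp_le_exp.2 ?_) (norm_nonneg _)
    push_cast
    have hπ : (0:ℝ) < π := Real.pi_pos
    have htt : t₀ ≤ t := ht
    have hn : (0:ℝ) ≤ (n:ℝ) := Nat.cast_nonneg n
    nlinarith [mul_nonneg (mul_nonneg (by positivity : (0:ℝ) ≤ 2*π) hn) (sub_nonneg.2 htt)]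
  calc (∑' n : ℕ, ‖c (n+1) * Complex.exp (2*π*I*((n:ℂ)+1)*((t:ℂ)*I))‖)
      ≤ ∑' n : ℕ, (‖c (n+1)‖ * Real.exp (-(2*π*(n+1)*t₀))) *
          (Real.exp ((2*π)*t₀) * Real.exp (-(2*π)*t)) := by
        refine Summable.tsum_le_tsum hterm hsum' (hbs.mul_right _)
    _ = (∑' n : ℕ, ‖c (n+1)‖ * Real.exp (-(2*π*(n+1)*t₀))) * Real.exp ((2*π)*t₀) *
          Real.exp (-(2*π)*t) := by
        rw [tsum_mul_right]; ring


/-- for a meromorphic modular form `f = g/h` of even weight `k`,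
with no poles on the positive imaginary axis and regular at the cusp, the
regularized L-integral `L*(s, B)` is well-defined (absolutely convergent
integrals), independent of `B > 0`, and satisfies the functional equation
`L*(s, B) = i^k L*(k - s, 1/B)`. -/
theorem stmt_10 (k₁ k₂ k : ℤ) (g h f : ℂ → ℂ)
    (hg : IsModularForm k₁ g) (hh : IsModularForm k₂ h)
    (hhne : ∃ z : ℂ, 0 < z.im ∧ h z ≠ 0)
    (hk : k = k₁ - k₂) (hke : Even k)
    (hf : ∀ z : ℂ, f z = g z / h z)
    (haxis : ∀ t : ℝ, 0 < t → h (t * I) ≠ 0)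
    (T : ℝ) (hT : 0 < T) (c : ℕ → ℂ)
    (hcusp : ∀ τ : ℂ, T < τ.im → h τ ≠ 0 ∧
      Summable (fun n : ℕ => ‖c n * Complex.exp (2 * π * I * n * τ)‖) ∧
      f τ = ∑' n : ℕ, c n * Complex.exp (2 * π * I * n * τ)) :
    (∀ B : ℝ, 0 < B → ∀ s : ℂ,
      IntegrableOn (fun t : ℝ => (t : ℂ) ^ (s - 1) * (f (t * I) - c 0)) (Set.Ioi B) ∧
      IntegrableOn (fun t : ℝ =>
        (t : ℂ) ^ ((k : ℂ) - s - 1) * (f (t * I) - c 0)) (Set.Ioi (1 / B))) ∧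
    (∀ B B' : ℝ, 0 < B → 0 < B' → ∀ s : ℂ, s ≠ 0 → s ≠ (k : ℂ) →
      Lstar f (c 0) k B s = Lstar f (c 0) k B' s) ∧
    (∀ B : ℝ, 0 < B → ∀ s : ℂ, s ≠ 0 → s ≠ (k : ℂ) →
      Lstar f (c 0) k B s = I ^ k * Lstar f (c 0) k (1 / B) ((k : ℂ) - s)) := by
  -- continuity of f on the imaginary axis
  have hmap : Set.MapsTo (fun t : ℝ => (t:ℂ) * I) (Set.Ioi 0) {z : ℂ | 0 < z.im} := by
    intro t ht; simpa using ht
  have hcoe : ContinuousOn (fun t : ℝ => (t:ℂ) * I) (Set.Ioi 0) :=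
    (Complex.continuous_ofReal.mul continuous_const).continuousOn
  have contf : ContinuousOn (fun t : ℝ => f ((t:ℂ) * I)) (Set.Ioi 0) := by
    have cg : ContinuousOn (fun t : ℝ => g ((t:ℂ)*I)) (Set.Ioi 0) :=
      (hg.1.continuousOn).comp hcoe hmap
    have ch : ContinuousOn (fun t : ℝ => h ((t:ℂ)*I)) (Set.Ioi 0) :=
      (hh.1.continuousOn).comp hcoe hmap
    exact (cg.div ch fun t ht => haxis t ht).congr fun t ht => hf _
  -- decay
  obtain ⟨M, hM⟩ := aux_decay f T c (fun τ hτ => ⟨(hcusp τ hτ).2.1, (hcusp τ hτ).2.2⟩)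
  have contF : ContinuousOn (fun t : ℝ => f ((t:ℂ) * I) - c 0) (Set.Ioi 0) :=
    contf.sub continuousOn_const
  have decF : ∀ t : ℝ, T + 1 ≤ t → ‖f ((t:ℂ)*I) - c 0‖ ≤ M * Real.exp (-(2*π)*t) := hM
  -- part 1 machine
  have key1 : ∀ (w : ℂ) (B : ℝ), 0 < B →
      IntegrableOn (fun t : ℝ => (t:ℂ) ^ w * (f ((t:ℂ)*I) - c 0)) (Set.Ioi B) :=
    fun w B hB => aux_integrable contF M (T+1) decF w hB
  -- I^k * I^k = 1
  have Isq : (I:ℂ) ^ k * I ^ k = 1 := by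
    obtain ⟨m, hm⟩ := hke
    rw [← zpow_add₀ I_ne_zero, hm]
    have e : (m + m) + (m + m) = 4 * m := by ring
    rw [e, zpow_mul]
    rw [show ((4:ℤ)) = ((4:ℕ):ℤ) from rfl, zpow_natCast, Complex.I_pow_four, one_zpow]
  -- modular transform on the axis
  have ftrans : ∀ x : ℝ, 0 < x →
      f (((x⁻¹:ℝ):ℂ) * I) = I ^ k * (x:ℂ) ^ (k:ℤ) * f ((x:ℂ)*I) := by
    intro x hx
    have hxc : (x:ℂ) ≠ 0 := Complex.ofReal_ne_zero.2 hx.ne'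
    have hz : ((x:ℂ)*I) ≠ 0 := mul_ne_zero hxc I_ne_zero
    have him : 0 < ((x:ℂ)*I).im := by simpa using hx
    have h1 : -((x:ℂ)*I)⁻¹ = ((x⁻¹:ℝ):ℂ) * I := by
      rw [mul_inv, Complex.inv_I]; push_cast; ring
    rw [← h1, hf, hg.2.2.1 _ him, hh.2.2.1 _ him, hf, mul_div_mul_comm,
      ← zpow_sub₀ hz, ← hk, mul_zpow]
    ring
  -- continuity of cpow
  have contw : ∀ w : ℂ, ContinuousOn (fun t : ℝ => (t:ℂ)^w) (Set.Ioi 0) := by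
    intro w
    apply ContinuousOn.cpow Complex.continuous_ofReal.continuousOn continuousOn_const
    intro x hx
    exact Complex.ofReal_mem_slitPlane.2 hx
  have contg : ∀ w : ℂ, ContinuousOn (fun t : ℝ => (t:ℂ)^w * (f ((t:ℂ)*I) - c 0))
      (Set.Ioi 0) := fun w => (contw w).mul contF
  -- main: B-independence for B ≤ B'
  have main : ∀ B B' : ℝ, 0 < B → B ≤ B' → ∀ s : ℂ, s ≠ 0 → s ≠ (k:ℂ) →
      Lstar f (c 0) k B s = Lstar f (c 0) k B' s := by
    intro B B' hB hBB s hs hsk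
    have hB' : 0 < B' := lt_of_lt_of_le hB hBB
    have hBinv : (0:ℝ) < 1/B := by positivity
    have hB'inv : (0:ℝ) < 1/B' := by positivity
    have hIBB : 1/B' ≤ 1/B := by
      apply one_div_le_one_div_of_le hB hBB
    have hsk' : (k:ℂ) - s ≠ 0 := sub_ne_zero.2 (Ne.symm hsk)
    have hsk'' : s - (k:ℂ) ≠ 0 := sub_ne_zero.2 hsk
    have hsubBB : Set.uIcc B B' ⊆ Set.Ioi (0:ℝ) := by
      rw [Set.uIcc_of_le hBB]
      exact fun x hx => lt_of_lt_of_le hB hx.1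
    -- splitting the two improper integrals
    have split1 : (∫ t in Set.Ioi B, (t:ℂ)^(s-1)*(f ((t:ℂ)*I) - c 0))
        = (∫ t in B..B', (t:ℂ)^(s-1)*(f ((t:ℂ)*I) - c 0))
          + ∫ t in Set.Ioi B', (t:ℂ)^(s-1)*(f ((t:ℂ)*I) - c 0) := by
      rw [intervalIntegral.integral_of_le hBB,
        ← setIntegral_union Ioc_disjoint_Ioi_same measurableSet_Ioi
          ((key1 _ _ hB).mono_set Set.Ioc_subset_Ioi_self) (key1 _ _ hB'),
        Set.Ioc_union_Ioi_eq_Ioi hBB]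
    have split2 : (∫ t in Set.Ioi (1/B'), (t:ℂ)^((k:ℂ)-s-1)*(f ((t:ℂ)*I) - c 0))
        = (∫ t in (1/B')..(1/B), (t:ℂ)^((k:ℂ)-s-1)*(f ((t:ℂ)*I) - c 0))
          + ∫ t in Set.Ioi (1/B), (t:ℂ)^((k:ℂ)-s-1)*(f ((t:ℂ)*I) - c 0) := by
      rw [intervalIntegral.integral_of_le hIBB,
        ← setIntegral_union Ioc_disjoint_Ioi_same measurableSet_Ioi
          ((key1 _ _ hB'inv).mono_set Set.Ioc_subset_Ioi_self) (key1 _ _ hBinv),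
        Set.Ioc_union_Ioi_eq_Ioi hIBB]
    -- substitution t ↦ 1/t
    have hderiv : ∀ x ∈ Set.uIcc B B', HasDerivAt (fun y : ℝ => y⁻¹) (-((x:ℝ)^2)⁻¹) x :=
      fun x hx => hasDerivAt_inv (ne_of_gt (hsubBB hx))
    have hcont' : ContinuousOn (fun x : ℝ => -((x:ℝ)^2)⁻¹) (Set.uIcc B B') := by
      refine ContinuousOn.neg (ContinuousOn.inv₀ (by fun_prop) ?_)
      exact fun x hx => pow_ne_zero 2 (ne_of_gt (hsubBB hx))
    have himg : (fun y:ℝ => y⁻¹) '' Set.uIcc B B' ⊆ Set.Ioi 0 := by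
      rintro _ ⟨x, hx, rfl⟩
      exact inv_pos.2 (show (0:ℝ) < x from hsubBB hx)
    have hsubst := intervalIntegral.integral_comp_smul_deriv' hderiv hcont'
      ((contg ((k:ℂ)-s-1)).mono himg)
    -- hsubst : ∫ x in B..B', (-(x^2)⁻¹) • ((g ∘ inv) x) = ∫ x in B⁻¹..B'⁻¹, g x
    have hQ : (∫ t in (1/B')..(1/B), (t:ℂ)^((k:ℂ)-s-1)*(f ((t:ℂ)*I) - c 0))
        = ∫ x in B..B', ((I:ℂ)^k * ((x:ℂ)^(s-1) * f ((x:ℂ)*I)) - c 0 * (x:ℂ)^(s-(k:ℂ)-1)) := by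
      have h1 : (∫ t in (1/B')..(1/B), (t:ℂ)^((k:ℂ)-s-1)*(f ((t:ℂ)*I) - c 0))
          = -∫ t in B⁻¹..B'⁻¹, (t:ℂ)^((k:ℂ)-s-1)*(f ((t:ℂ)*I) - c 0) := by
        rw [one_div, one_div, intervalIntegral.integral_symm]
      rw [h1, ← hsubst, ← intervalIntegral.integral_neg]
      apply intervalIntegral.integral_congr
      intro x hx
      have hx0 : (0:ℝ) < x := hsubBB hx
      have hxc : (x:ℂ) ≠ 0 := Complex.ofReal_ne_zero.2 hx0.ne'
      have harg : (x:ℂ).arg ≠ π := by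
        rw [Complex.arg_ofReal_of_nonneg hx0.le]
        exact Ne.symm Real.pi_ne_zero
      simp only [Function.comp, neg_smul, neg_neg, Complex.real_smul]
      rw [ftrans x hx0]
      push_cast
      rw [Complex.inv_cpow _ _ harg, ← Complex.cpow_neg]
      rw [show ((x:ℂ)^2)⁻¹ = (x:ℂ)^(-(2:ℂ)) by
        rw [Complex.cpow_neg, Complex.cpow_two]]
      rw [show (x:ℂ)^k = (x:ℂ)^((k:ℤ):ℂ) from (Complex.cpow_intCast _ _).symm]
      have hmul : ∀ a b : ℂ, (x:ℂ)^a * (x:ℂ)^b = (x:ℂ)^(a+b) :=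
        fun a b => (Complex.cpow_add a b hxc).symm
      have E1 : (x:ℂ)^(-(2:ℂ)) * ((x:ℂ)^(-((k:ℂ)-s-1)) * (x:ℂ)^((k:ℂ))) = (x:ℂ)^(s-1) := by
        rw [hmul, hmul]; congr 1; ring
      have E2 : (x:ℂ)^(-(2:ℂ)) * (x:ℂ)^(-((k:ℂ)-s-1)) = (x:ℂ)^(s-(k:ℂ)-1) := by
        rw [hmul]; congr 1; ring
      linear_combination ((I:ℂ)^k * f ((x:ℂ)*I)) * E1 - c 0 * E2
    -- interval integrability
    have ii1 : IntervalIntegrable (fun x:ℝ => (x:ℂ)^(s-1) * f ((x:ℂ)*I)) volume B B' :=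
      (((contw (s-1)).mul contf).mono hsubBB).intervalIntegrable
    have ii2 : IntervalIntegrable (fun x:ℝ => (x:ℂ)^(s-1)) volume B B' :=
      ((contw (s-1)).mono hsubBB).intervalIntegrable
    have ii3 : IntervalIntegrable (fun x:ℝ => (x:ℂ)^(s-(k:ℂ)-1)) volume B B' :=
      ((contw (s-(k:ℂ)-1)).mono hsubBB).intervalIntegrable
    have h0mem : (0:ℝ) ∉ Set.uIcc B B' := fun h0 => (lt_irrefl (0:ℝ)) (hsubBB h0)
    have val1 : (∫ x in B..B', (x:ℂ)^(s-1)) = ((B':ℂ)^s - (B:ℂ)^s)/s := by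
      rw [integral_cpow (Or.inr ⟨fun hcon => hs (by linear_combination hcon), h0mem⟩)]
      have e : s - 1 + 1 = s := by ring
      rw [e]
    have val2 : (∫ x in B..B', (x:ℂ)^(s-(k:ℂ)-1))
        = ((B:ℂ)^(s-(k:ℂ)) - (B':ℂ)^(s-(k:ℂ)))/((k:ℂ)-s) := by
      rw [integral_cpow (Or.inr ⟨fun hcon => hsk'' (by linear_combination hcon), h0mem⟩)]
      have e : s - (k:ℂ) - 1 + 1 = s - (k:ℂ) := by ring
      rw [e, div_eq_div_iff hsk'' hsk']
      ring
    have Pval : (∫ t in B..B', (t:ℂ)^(s-1)*(f ((t:ℂ)*I) - c 0))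
        = (∫ t in B..B', (t:ℂ)^(s-1)*f ((t:ℂ)*I)) - c 0 * (((B':ℂ)^s - (B:ℂ)^s)/s) := by
      have he : ∀ t ∈ Set.uIcc B B', (t:ℂ)^(s-1)*(f ((t:ℂ)*I) - c 0)
          = (t:ℂ)^(s-1)*f ((t:ℂ)*I) - c 0 * (t:ℂ)^(s-1) := fun t _ => by ring
      rw [intervalIntegral.integral_congr he,
        intervalIntegral.integral_sub ii1 (ii2.const_mul _),
        intervalIntegral.integral_const_mul, val1]
    have Qval : (I:ℂ)^k * (∫ t in (1/B')..(1/B), (t:ℂ)^((k:ℂ)-s-1)*(f ((t:ℂ)*I) - c 0))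
        = (∫ t in B..B', (t:ℂ)^(s-1)*f ((t:ℂ)*I))
          - (I:ℂ)^k * c 0 * (((B:ℂ)^(s-(k:ℂ)) - (B':ℂ)^(s-(k:ℂ)))/((k:ℂ)-s)) := by
      rw [hQ, intervalIntegral.integral_sub (ii1.const_mul _) (ii3.const_mul _),
        intervalIntegral.integral_const_mul, intervalIntegral.integral_const_mul, val2]
      linear_combination (∫ t in B..B', (t:ℂ)^(s-1)*f ((t:ℂ)*I)) * Isq
    -- assemble
    simp only [Lstar]
    rw [split1, split2, Pval]
    linear_combination -Qval
  have cpow_inv : ∀ (B : ℝ), 0 < B → ∀ (w : ℂ), ((1/B:ℝ):ℂ) ^ w = (B:ℂ) ^ (-w) := by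
    intro B hB w
    have harg : (B:ℂ).arg ≠ π := by
      rw [Complex.arg_ofReal_of_nonneg hB.le]; exact Ne.symm Real.pi_ne_zero
    rw [Complex.cpow_neg, ← Complex.inv_cpow _ _ harg]
    congr 1
    push_cast
    ring
  have part3 : ∀ B : ℝ, 0 < B → ∀ s : ℂ, s ≠ 0 → s ≠ (k:ℂ) →
      Lstar f (c 0) k B s = I ^ k * Lstar f (c 0) k (1 / B) ((k:ℂ) - s) := by
    intro B hB s hs hsk
    simp only [Lstar]
    rw [show (1:ℝ)/(1/B) = B from one_div_one_div B]
    rw [cpow_inv B hB ((k:ℂ)-s), cpow_inv B hB ((k:ℂ)-s-(k:ℂ))]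
    have e1 : (k:ℂ) - ((k:ℂ) - s) - 1 = s - 1 := by ring
    have e2 : -((k:ℂ) - s) = s - (k:ℂ) := by ring
    have e3 : -((k:ℂ) - s - (k:ℂ)) = s := by ring
    have e4 : (k:ℂ) - ((k:ℂ) - s) = s := by ring
    rw [e1, e2, e3, e4]
    linear_combination (c 0 * (B:ℂ)^s/s
      - ∫ t in Set.Ioi B, (t:ℂ)^(s-1)*(f ((t:ℂ)*I) - c 0)) * Isq
  refine ⟨fun B hB s => ⟨key1 (s-1) B hB, key1 ((k:ℂ)-s-1) (1/B) (by positivity)⟩,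
    fun B B' hB hB' s hs hsk => ?_, part3⟩
  rcases le_total B B' with hle | hle
  · exact main B B' hB hle s hs hsk
  · exact (main B' B hB' hle s hs hsk).symm
end

section
/- Let g and h be level-one holomorphic modular forms of weights k₁ and k₂ with h not identically zero, and define F : ℂ → ℂ by F(τ) = g(τ)/h(τ) for Im τ > 0 and F(τ) = 0 otherwise. Suppose F vanishes at the cusp: there exist T > 0 and c : ℕ → ℂ such that h(τ) ≠ 0 and F(τ) = Σ_{n≥1} c(n) e^{2πinτ} (absolutely convergent) for all τ with Im τ > T. Then for every natural number Δ there exists t* > 0 such that F is complex-differentiable to all orders at iτ for every purely imaginary point it with 0 < t < t*, and the Δ-th complex derivative satisfies F^{(Δ)}(it) → 0 as t → 0⁺. -/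
open Complex Real Filter Topology
open scoped NNReal

lemma cusp_bound (F : ℂ → ℂ) (T : ℝ) (c : ℕ → ℂ)
    (hcusp : ∀ τ : ℂ, T < τ.im →
      Summable (fun n : ℕ => ‖c (n + 1) * Complex.exp (2 * π * I * ((n : ℂ) + 1) * τ)‖) ∧
      F τ = ∑' n : ℕ, c (n + 1) * Complex.exp (2 * π * I * ((n : ℂ) + 1) * τ)) :
    ∃ C : ℝ, 0 ≤ C ∧ ∀ τ : ℂ, T + 1 ≤ τ.im → ‖F τ‖ ≤ C * Real.exp (-(2 * π * τ.im)) := by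
  have hre : ∀ (n : ℕ) (τ : ℂ), (2 * π * I * ((n : ℂ) + 1) * τ).re = -(2*π*((n:ℝ)+1)*τ.im) := by
    intro n τ; simp [Complex.mul_re, Complex.mul_im]
  have hterm : ∀ (n : ℕ) (τ : ℂ), ‖c (n + 1) * Complex.exp (2 * π * I * ((n : ℂ) + 1) * τ)‖
      = ‖c (n+1)‖ * Real.exp (-(2*π*((n:ℝ)+1)*τ.im)) := by
    intro n τ
    rw [norm_mul, Complex.norm_exp, hre]
  set τ₀ : ℂ := ((T:ℂ) + 1) * I with hτ₀
  have hτ₀im : τ₀.im = T + 1 := by simp [hτ₀]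
  have hτ₀T : T < τ₀.im := by rw [hτ₀im]; linarith
  obtain ⟨hsum0, -⟩ := hcusp τ₀ hτ₀T
  set S : ℝ := ∑' n : ℕ, ‖c (n + 1) * Complex.exp (2 * π * I * ((n : ℂ) + 1) * τ₀)‖ with hS
  have hS0 : 0 ≤ S := tsum_nonneg (fun n => norm_nonneg _)
  refine ⟨S * Real.exp (2*π*(T+1)), by positivity, fun τ hτ => ?_⟩
  have hτT : T < τ.im := by linarith
  obtain ⟨hsum, heq⟩ := hcusp τ hτT
  rw [heq]
  calc ‖∑' n : ℕ, c (n + 1) * Complex.exp (2 * π * I * ((n : ℂ) + 1) * τ)‖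
      ≤ ∑' n : ℕ, ‖c (n + 1) * Complex.exp (2 * π * I * ((n : ℂ) + 1) * τ)‖ :=
        norm_tsum_le_tsum_norm hsum
    _ ≤ ∑' n : ℕ, ‖c (n + 1) * Complex.exp (2 * π * I * ((n : ℂ) + 1) * τ₀)‖
          * Real.exp (-(2*π*(τ.im - (T+1)))) := by
        refine Summable.tsum_le_tsum (fun n => ?_) hsum (hsum0.mul_right _)
        rw [hterm, hterm, hτ₀im, mul_assoc (‖c (n+1)‖), ← Real.exp_add]
        refine mul_le_mul_of_nonneg_left (Real.exp_le_exp.2 ?_) (norm_nonneg _)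
        have h1 : (1:ℝ) ≤ (n:ℝ) + 1 := by simp [Nat.cast_nonneg]
        have hπ : (0:ℝ) < π := Real.pi_pos
        nlinarith [mul_le_mul_of_nonneg_left (sub_le_sub_right hτ (T+1))
          (le_of_lt hπ)]
    _ = S * Real.exp (2*π*(T+1)) * Real.exp (-(2 * π * τ.im)) := by
        have harg : 2*π*(T+1) + -(2*π*τ.im) = -(2*π*(τ.im-(T+1))) := by ring
        rw [tsum_mul_right, ← hS, mul_assoc S, ← Real.exp_add, harg]

lemma neg_inv_im_pos {w : ℂ} (hw : 0 < w.im) : (-w⁻¹).im = w.im / Complex.normSq w := by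
  rw [Complex.neg_im, Complex.inv_im, neg_div, neg_neg]

lemma F_transform (k₁ k₂ : ℤ) (g h : ℂ → ℂ)
    (hg1 : ∀ z : ℂ, 0 < z.im → g (-z⁻¹) = z ^ k₁ * g z)
    (hh1 : ∀ z : ℂ, 0 < z.im → h (-z⁻¹) = z ^ k₂ * h z)
    (F : ℂ → ℂ) (hF : ∀ τ : ℂ, F τ = if 0 < τ.im then g τ / h τ else 0)
    (w : ℂ) (hw : 0 < w.im) : F w = w ^ (k₂ - k₁) * F (-w⁻¹) := by
  have hw0 : w ≠ 0 := fun h0 => by simp [h0] at hw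
  have hinv : 0 < (-w⁻¹).im := by
    rw [neg_inv_im_pos hw]
    exact div_pos hw (Complex.normSq_pos.2 hw0)
  rw [hF w, hF (-w⁻¹), if_pos hw, if_pos hinv, hg1 w hw, hh1 w hw]
  rw [mul_div_mul_comm, ← mul_assoc, ← zpow_sub₀ hw0, ← zpow_add₀ hw0]
  have h0 : k₂ - k₁ + (k₁ - k₂) = 0 := by ring
  rw [h0, zpow_zero, one_mul]

lemma h_ne_of_im (k₂ : ℤ) (h : ℂ → ℂ)
    (hh1 : ∀ z : ℂ, 0 < z.im → h (-z⁻¹) = z ^ k₂ * h z)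
    (T : ℝ) (hne : ∀ τ : ℂ, T < τ.im → h τ ≠ 0)
    (w : ℂ) (hw : 0 < w.im) (hbig : T < w.im / Complex.normSq w) : h w ≠ 0 := by
  have hw0 : w ≠ 0 := fun h0 => by simp [h0] at hw
  set z : ℂ := -w⁻¹ with hz
  have hzim : z.im = w.im / Complex.normSq w := neg_inv_im_pos hw
  have hzpos : 0 < z.im := by
    rw [hzim]; exact div_pos hw (Complex.normSq_pos.2 hw0)
  have hz0 : z ≠ 0 := fun h0 => by simp [h0] at hzpos
  have hwz : -z⁻¹ = w := by
    rw [hz, inv_neg, inv_inv, neg_neg]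
  have := hh1 z hzpos
  rw [hwz] at this
  rw [this]
  exact mul_ne_zero (zpow_ne_zero _ hz0) (hne z (by rw [hzim]; exact hbig))

lemma geom_ball (t : ℝ) (ht : 0 < t) (w : ℂ) (hw : w ∈ Metric.closedBall ((t:ℂ)*I) (t/2)) :
    t/2 ≤ w.im ∧ t/2 ≤ ‖w‖ ∧ ‖w‖ ≤ 3*t/2 ∧
      2/(9*t) ≤ w.im / Complex.normSq w := by
  have hd : ‖w - (t:ℂ)*I‖ ≤ t/2 := by
    simpa [Metric.mem_closedBall, Complex.dist_eq] using hw
  have himle : |w.im - t| ≤ t/2 := by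
    have h1 := Complex.abs_im_le_norm (w - (t:ℂ)*I)
    have h2 : (w - (t:ℂ)*I).im = w.im - t := by simp
    rw [h2] at h1
    exact h1.trans hd
  have him : t/2 ≤ w.im := by
    have := abs_le.1 himle
    linarith [this.1]
  have habsI : ‖(t:ℂ)*I‖ = t := by
    simp [abs_of_pos ht]
  have habs_up : ‖w‖ ≤ 3*t/2 := by
    calc ‖w‖ = ‖(w - (t:ℂ)*I) + (t:ℂ)*I‖ := by ring_nf
      _ ≤ ‖w - (t:ℂ)*I‖ + ‖(t:ℂ)*I‖ := norm_add_le _ _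
      _ ≤ t/2 + t := by rw [habsI]; linarith
      _ = 3*t/2 := by ring
  have habs_lo : t/2 ≤ ‖w‖ := by
    have h3 : ‖(t:ℂ)*I‖ - ‖w‖ ≤ ‖(t:ℂ)*I - w‖ := norm_sub_norm_le _ _
    have h4 : ‖(t:ℂ)*I - w‖ = ‖w - (t:ℂ)*I‖ := norm_sub_rev _ _
    rw [h4, habsI] at h3
    linarith
  have hnormSq : Complex.normSq w = ‖w‖ ^ 2 := (Complex.sq_norm w).symm
  refine ⟨him, habs_lo, habs_up, ?_⟩
  have hw0 : w ≠ 0 := by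
    intro h0
    rw [h0] at habs_lo
    simp at habs_lo
    linarith
  rw [div_le_div_iff₀ (by positivity) (Complex.normSq_pos.2 hw0)]
  nlinarith [hnormSq, habs_up, him, Complex.normSq_pos.2 hw0]

lemma zpow_bound (m : ℤ) (x t : ℝ) (ht : 0 < t) (ht1 : t ≤ 1) (hlo : t/2 ≤ x)
    (hup : x ≤ 3*t/2) :
    x ^ m ≤ (3/2)^m.natAbs * (t/2)^(-(m.natAbs:ℤ)) := by
  have hx0 : 0 < x := lt_of_lt_of_le (by positivity) hlo
  have h2 : 0 < t/2 := by positivity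
  have h21 : t/2 ≤ 1 := by linarith
  rcases le_or_gt 0 m with hm | hm
  · lift m to ℕ using hm
    rw [zpow_natCast, Int.natAbs_natCast]
    have h1 : x ^ m ≤ (3/2)^m := by
      calc x^m ≤ (3*t/2)^m := pow_le_pow_left₀ hx0.le hup m
        _ ≤ (3/2)^m := pow_le_pow_left₀ (by positivity) (by linarith) m
    have h2' : (1:ℝ) ≤ (t/2)^(-(m:ℤ)) := by
      rw [zpow_neg, zpow_natCast, one_le_inv_iff₀]
      exact ⟨by positivity, pow_le_one₀ h2.le h21⟩
    calc x ^ m ≤ (3/2)^m := h1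
      _ = (3/2)^m * 1 := (mul_one _).symm
      _ ≤ (3/2)^m * (t/2)^(-(m:ℤ)) := by
          exact mul_le_mul_of_nonneg_left h2' (by positivity)
  · have hxm : x ^ m = (x ^ m.natAbs)⁻¹ := by
      rw [← zpow_natCast, ← zpow_neg]; congr 1; omega
    rw [hxm, zpow_neg, zpow_natCast]
    have hinv : (x^m.natAbs)⁻¹ ≤ ((t/2)^m.natAbs)⁻¹ := by
      apply inv_anti₀ (by positivity) (pow_le_pow_left₀ h2.le hlo _)
    calc (x^m.natAbs)⁻¹ ≤ ((t/2)^m.natAbs)⁻¹ := hinv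
      _ ≤ (3/2)^m.natAbs * ((t/2)^m.natAbs)⁻¹ := by
          refine le_mul_of_one_le_left (by positivity) (one_le_pow₀ (by norm_num))

/-- if `F = g/h` (a quotient of level-one holomorphic modular forms,
extended by `0` off the upper half-plane) vanishes at the cusp, then for every `Δ`
all complex derivatives of `F` exist at `it` for small `t > 0` and the `Δ`-th
derivative tends to `0` as `t → 0⁺`. -/
theorem stmt_11 (k₁ k₂ : ℤ) (g h : ℂ → ℂ)
    (hg : IsModularForm k₁ g) (hh : IsModularForm k₂ h)
    (hhne : ∃ z : ℂ, 0 < z.im ∧ h z ≠ 0)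
    (F : ℂ → ℂ) (hF : ∀ τ : ℂ, F τ = if 0 < τ.im then g τ / h τ else 0)
    (T : ℝ) (hT : 0 < T) (c : ℕ → ℂ)
    (hcusp : ∀ τ : ℂ, T < τ.im → h τ ≠ 0 ∧
      Summable (fun n : ℕ => ‖c (n + 1) * Complex.exp (2 * π * I * ((n : ℂ) + 1) * τ)‖) ∧
      F τ = ∑' n : ℕ, c (n + 1) * Complex.exp (2 * π * I * ((n : ℂ) + 1) * τ))
    (Δ : ℕ) :
    ∃ tstar : ℝ, 0 < tstar ∧
      (∀ t : ℝ, 0 < t → t < tstar →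
        ∀ n : ℕ, DifferentiableAt ℂ (iteratedDeriv n F) ((t : ℂ) * I)) ∧
      Tendsto (fun t : ℝ => iteratedDeriv Δ F ((t : ℂ) * I))
        (nhdsWithin 0 (Set.Ioi 0)) (nhds 0) := by
  obtain ⟨C, hC0, hCb⟩ := cusp_bound F T c (fun τ hτ => ⟨(hcusp τ hτ).2.1, (hcusp τ hτ).2.2⟩)
  set V : Set ℂ := {z : ℂ | 0 < z.im} ∩ h ⁻¹' {0}ᶜ with hV
  have hupper : IsOpen {z : ℂ | 0 < z.im} := isOpen_lt continuous_const Complex.continuous_im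
  have hVopen : IsOpen V :=
    ContinuousOn.isOpen_inter_preimage hh.1.continuousOn hupper isOpen_compl_singleton
  have hFV : DifferentiableOn ℂ F V := by
    have hgd : DifferentiableOn ℂ g V := hg.1.mono Set.inter_subset_left
    have hhd : DifferentiableOn ℂ h V := hh.1.mono Set.inter_subset_left
    refine (hgd.div hhd (fun z hz => hz.2)).congr (fun z hz => ?_)
    rw [hF z]; exact if_pos hz.1
  have hFan : AnalyticOnNhd ℂ F V := hFV.analyticOnNhd hVopen
  set tstar : ℝ := min 1 (2 / (9 * (T + 1))) with htstar
  have htspos : 0 < tstar := lt_min one_pos (by positivity)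
  -- membership of the closed ball in V
  have hball : ∀ t : ℝ, 0 < t → t < tstar →
      Metric.closedBall ((t:ℂ)*I) (t/2) ⊆ V := by
    intro t ht hts w hw
    obtain ⟨him, hlo, hup, hratio⟩ := geom_ball t ht w hw
    have himpos : 0 < w.im := lt_of_lt_of_le (by positivity) him
    have hT1 : T + 1 < 2 / (9 * t) := by
      have h1 : t < 2 / (9 * (T + 1)) := lt_of_lt_of_le hts (min_le_right _ _)
      rw [lt_div_iff₀ (by positivity)] at h1 ⊢
      nlinarith
    have hTratio : T < w.im / Complex.normSq w := by
      linarith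
    exact ⟨himpos, h_ne_of_im k₂ h hh.2.2.1 T (fun τ hτ => (hcusp τ hτ).1) w himpos hTratio⟩
  refine ⟨tstar, htspos, ?_, ?_⟩
  · intro t ht hts n
    have hmem : (t:ℂ)*I ∈ V :=
      hball t ht hts (Metric.mem_closedBall_self (by positivity))
    rw [iteratedDeriv_eq_iterate]
    exact ((hFan.iterated_deriv n) _ hmem).differentiableAt
  · -- the limit
    set N : ℕ := (k₂ - k₁).natAbs with hN
    set P : ℕ := N + Δ with hP
    set K : ℝ := (Nat.factorial Δ : ℝ) * ((3/2)^N * C * 2^P) with hK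
    have hπ : (0:ℝ) < π := Real.pi_pos
    set G : ℝ → ℝ := fun t => K * (t ^ (-(P:ℤ)) * Real.exp (-(4*π/9)/t)) with hG
    have hGlim : Tendsto G (𝓝[>] (0:ℝ)) (𝓝 0) := by
      have hcomp : Tendsto (fun t:ℝ => ((4*π/9) * t⁻¹)^P * Real.exp (-((4*π/9) * t⁻¹)))
          (𝓝[>] (0:ℝ)) (𝓝 0) :=
        (tendsto_pow_mul_exp_neg_atTop_nhds_zero P).comp
          (Tendsto.const_mul_atTop (by positivity) tendsto_inv_nhdsGT_zero)
      have h5 := hcomp.const_mul (K * (9/(4*π))^P)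
      rw [mul_zero] at h5
      refine h5.congr' ?_
      filter_upwards [self_mem_nhdsWithin] with t ht
      have ht0 : (0:ℝ) < t := ht
      rw [hG]
      simp only
      rw [zpow_neg, zpow_natCast, div_eq_mul_inv (-(4*π/9)), neg_mul, mul_pow, inv_pow]
      rw [show -(4*π/9 * t⁻¹) = -(4*π/9) * t⁻¹ from by ring]
      field_simp
      ring_nf
      rw [mul_assoc K, ← mul_pow, mul_inv_cancel₀ hπ.ne', one_pow, mul_one, mul_assoc, ← mul_pow]
      norm_num
    refine squeeze_zero_norm' ?_ hGlim
    filter_upwards [eventually_nhdsWithin_of_eventually_nhds (Iio_mem_nhds htspos),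
      self_mem_nhdsWithin] with t hts ht
    have ht0 : (0:ℝ) < t := ht
    have ht1 : t ≤ 1 := le_of_lt (lt_of_lt_of_le hts (min_le_left _ _))
    set x : ℂ := (t:ℂ)*I with hx
    set R : ℝ≥0 := ⟨t/2, by positivity⟩ with hR
    have hRc : (R:ℝ) = t/2 := rfl
    have hRpos : 0 < R := by
      rw [← NNReal.coe_lt_coe, NNReal.coe_zero, hRc]; positivity
    have hsub : Metric.closedBall x (t/2) ⊆ V := hball t ht0 hts
    have hps : HasFPowerSeriesOnBall F (cauchyPowerSeries F x R) x R := by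
      refine (hFV.mono ?_).hasFPowerSeriesOnBall hRpos
      rw [hRc]; exact hsub
    set E : ℝ := Real.exp (-(4*π/9)/t) with hE
    have hE0 : 0 < E := Real.exp_pos _
    set Mt : ℝ := (3/2)^N * (t/2)^(-(N:ℤ)) * (C * E) with hMt
    have hMt0 : 0 ≤ Mt := by
      have : (0:ℝ) ≤ (t/2)^(-(N:ℤ)) := by positivity
      positivity
    have hT1 : T + 1 < 2 / (9 * t) := by
      have h1 : t < 2 / (9 * (T + 1)) := lt_of_lt_of_le hts (min_le_right _ _)
      rw [lt_div_iff₀ (by positivity)] at h1 ⊢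
      nlinarith
    -- pointwise bound on the closed ball
    have hFb : ∀ w ∈ Metric.closedBall x (t/2), ‖F w‖ ≤ Mt := by
      intro w hw
      obtain ⟨him, hlo, hup, hratio⟩ := geom_ball t ht0 w hw
      have himpos : 0 < w.im := lt_of_lt_of_le (by positivity) him
      have htr := F_transform k₁ k₂ g h hg.2.2.1 hh.2.2.1 F hF w himpos
      have hinvim : (-w⁻¹).im = w.im / Complex.normSq w := neg_inv_im_pos himpos
      have hinv_ge : T + 1 ≤ (-w⁻¹).im := by
        rw [hinvim]
        calc T + 1 ≤ 2/(9*t) := le_of_lt hT1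
          _ ≤ _ := hratio
      have hFinv : ‖F (-w⁻¹)‖ ≤ C * E := by
        calc ‖F (-w⁻¹)‖ ≤ C * Real.exp (-(2 * π * (-w⁻¹).im)) := hCb _ hinv_ge
          _ ≤ C * E := by
            refine mul_le_mul_of_nonneg_left ?_ hC0
            rw [hE]
            refine Real.exp_le_exp.2 ?_
            have harg : -(4*π/9)/t = -(2*π*(2/(9*t))) := by
              field_simp; ring
            rw [harg]
            have h7 : 2/(9*t) ≤ (-w⁻¹).im := by rw [hinvim]; exact hratio
            nlinarith
      have hzb : ‖w‖ ^ (k₂ - k₁) ≤ (3/2)^N * (t/2)^(-(N:ℤ)) := by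
        rw [hN]
        exact zpow_bound (k₂ - k₁) ‖w‖ t ht0 ht1 hlo hup
      calc ‖F w‖ = ‖w‖ ^ (k₂ - k₁) * ‖F (-w⁻¹)‖ := by
            rw [htr, norm_mul, norm_zpow]
        _ ≤ ((3/2)^N * (t/2)^(-(N:ℤ))) * (C * E) := by
            refine mul_le_mul hzb hFinv (norm_nonneg _) ?_
            have : (0:ℝ) ≤ (t/2)^(-(N:ℤ)) := by positivity
            positivity
        _ = Mt := rfl
    -- integral bound
    have hFcont : ContinuousOn (fun θ : ℝ => F (circleMap x (R:ℝ) θ)) (Set.uIcc 0 (2*π)) := by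
      refine hFV.continuousOn.comp (continuous_circleMap _ _).continuousOn (fun θ _ => ?_)
      refine hsub ?_
      have := circleMap_mem_sphere x (show (0:ℝ) ≤ (R:ℝ) from R.2) θ
      rw [hRc] at this ⊢
      exact Metric.sphere_subset_closedBall this
    have hint : (∫ θ : ℝ in (0)..(2*π), ‖F (circleMap x (R:ℝ) θ)‖) ≤ 2*π*Mt := by
      have h6 : (∫ θ : ℝ in (0)..(2*π), ‖F (circleMap x (R:ℝ) θ)‖)
          ≤ ∫ _ : ℝ in (0)..(2*π), Mt := by
        refine intervalIntegral.integral_mono_on (by positivity)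
          (hFcont.norm.intervalIntegrable) (intervalIntegrable_const) (fun θ _ => ?_)
        refine hFb _ ?_
        have := circleMap_mem_sphere x (show (0:ℝ) ≤ (R:ℝ) from R.2) θ
        rw [hRc] at this
        exact Metric.sphere_subset_closedBall this
      rw [intervalIntegral.integral_const, smul_eq_mul] at h6
      calc (∫ θ : ℝ in (0)..(2*π), ‖F (circleMap x (R:ℝ) θ)‖) ≤ (2*π - 0) * Mt := h6
        _ = 2*π*Mt := by ring
    -- derivative bound
    have hfact := hps.factorial_smul (1:ℂ) Δ
    rw [← iteratedDeriv_eq_iteratedFDeriv] at hfact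
    have hnorm1 : ‖iteratedDeriv Δ F x‖ = (Nat.factorial Δ : ℝ) * ‖cauchyPowerSeries F x R Δ (fun _ => 1)‖ := by
      rw [← hfact, nsmul_eq_mul, norm_mul]
      norm_num
    have hop : ‖cauchyPowerSeries F x R Δ (fun _ => (1:ℂ))‖ ≤ ‖cauchyPowerSeries F x R Δ‖ := by
      have := (cauchyPowerSeries F x R Δ).le_opNorm (fun _ => (1:ℂ))
      simpa using this
    have hcps := norm_cauchyPowerSeries_le F x (R:ℝ) Δ
    have habsR : |(R:ℝ)|⁻¹ = (t/2)⁻¹ := by rw [hRc, abs_of_pos (by positivity)]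
    have hcoef : ‖cauchyPowerSeries F x R Δ‖ ≤ Mt * ((t/2)⁻¹)^Δ := by
      refine hcps.trans ?_
      rw [habsR]
      refine mul_le_mul_of_nonneg_right ?_ (by positivity)
      calc (2*π)⁻¹ * ∫ θ : ℝ in (0)..(2*π), ‖F (circleMap x (R:ℝ) θ)‖
          ≤ (2*π)⁻¹ * (2*π*Mt) := by
            refine mul_le_mul_of_nonneg_left hint (by positivity)
        _ = Mt := by field_simp
    have hfinal : ‖iteratedDeriv Δ F x‖ ≤ G t := by
      rw [hnorm1, hG]
      have hGeq : K * (t ^ (-(P:ℤ)) * E) = (Nat.factorial Δ : ℝ) * (Mt * ((t/2)⁻¹)^Δ) := by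
        rw [hK, hMt, hP]
        simp only [zpow_neg, zpow_natCast, pow_add]
        field_simp
        have h3 : t * (2 / t) = 2 := by field_simp [ht0.ne']
        have h2' : (2:ℝ) ^ N * 2⁻¹ ^ N = 1 := by rw [← mul_pow]; norm_num
        have h4 : (t / 2) ^ N * 2 ^ N = t ^ N := by rw [← mul_pow]; congr 1; field_simp
        have h5 : t ^ Δ * (2 / t) ^ Δ = 2 ^ Δ := by rw [← mul_pow, h3]
        linear_combination (C * 2 ^ Δ) * h4 - (C * t ^ N) * h5
      simp only [← hE]
      rw [hGeq]
      refine mul_le_mul_of_nonneg_left ?_ (by positivity)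
      exact hop.trans hcoef
    exact hfinal
end

section
/- Let g and h be level-one holomorphic modular forms of weights k₁ and k₂ with h not identically zero and k := k₁ − k₂ ≤ 0, and define F : ℂ → ℂ by F(τ) = g(τ)/h(τ) for Im τ > 0 and F(τ) = 0 otherwise. Suppose F is regular at the cusp: there exist T > 0 and c : ℕ → ℂ such that h(τ) ≠ 0 and F(τ) = Σ_{n≥0} c(n) e^{2πinτ} (absolutely convergent) for all τ with Im τ > T. Then for every natural number Δ satisfying 2Δ ≤ −k or Δ ≥ −k + 1, there exists t* > 0 such that F is complex-differentiable to all orders at it for 0 < t < t*, and as t → 0⁺ the quantity (2πi)^{−Δ} F^{(Δ)}(it) converges to c(0) if k = 0 and Δ = 0, and converges to 0 otherwise. -/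
open Complex Real Filter Topology

lemma aux_cauchy_bound {f : ℂ → ℂ} {c : ℂ} {R M : ℝ} (hR : 0 < R)
    (hf : DifferentiableOn ℂ f (Metric.closedBall c R))
    (hM : ∀ z ∈ Metric.closedBall c R, ‖f z‖ ≤ M) (n : ℕ) :
    ‖iteratedDeriv n f c‖ ≤ n.factorial * M / R ^ n := by
  lift R to NNReal using hR.le with R hR'
  have hR0 : 0 < R := by exact_mod_cast hR
  have H : HasFPowerSeriesOnBall f (cauchyPowerSeries f c R) c R :=
    hf.hasFPowerSeriesOnBall hR0
  have key : iteratedDeriv n f c = n.factorial • (cauchyPowerSeries f c R n fun _ => (1 : ℂ)) := by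
    rw [iteratedDeriv_eq_iteratedFDeriv, ← H.factorial_smul (1 : ℂ) n]
  have hcont : Continuous fun θ : ℝ => ‖f (circleMap c R θ)‖ := by
    apply Continuous.norm
    apply hf.continuousOn.comp_continuous (continuous_circleMap c R)
    intro θ
    exact Metric.sphere_subset_closedBall (circleMap_mem_sphere c R.coe_nonneg θ)
  have h2π : (0 : ℝ) < 2 * π := by positivity
  have hint : (∫ θ in (0 : ℝ)..2 * π, ‖f (circleMap c R θ)‖) ≤ 2 * π * M := by
    have := intervalIntegral.integral_mono_on (le_of_lt h2π)
      (hcont.intervalIntegrable 0 (2 * π)) (intervalIntegrable_const (c := M) (μ := MeasureTheory.volume))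
      (fun θ _ => hM _ (Metric.sphere_subset_closedBall (circleMap_mem_sphere c R.coe_nonneg θ)))
    simpa [mul_comm] using this
  have hns : ‖cauchyPowerSeries f c R n‖ ≤ M * ((R : ℝ))⁻¹ ^ n := by
    refine le_trans (norm_cauchyPowerSeries_le f c R n) ?_
    rw [_root_.abs_of_nonneg R.coe_nonneg]
    have h1 : (2 * π)⁻¹ * (∫ θ in (0 : ℝ)..2 * π, ‖f (circleMap c R θ)‖) ≤ M := by
      rw [inv_mul_le_iff₀ h2π]
      linarith
    exact mul_le_mul_of_nonneg_right h1 (by positivity)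
  calc ‖iteratedDeriv n f c‖
      = n.factorial * ‖cauchyPowerSeries f c R n fun _ => (1 : ℂ)‖ := by
        rw [key, nsmul_eq_mul, norm_mul]
        simp
    _ ≤ n.factorial * ‖cauchyPowerSeries f c R n‖ := by
        have h := (cauchyPowerSeries f c R n).le_opNorm (fun _ => (1 : ℂ))
        simp only [norm_one, Finset.prod_const, one_pow, mul_one] at h
        exact mul_le_mul_of_nonneg_left h (by positivity)
    _ ≤ n.factorial * (M * ((R : ℝ))⁻¹ ^ n) :=
        mul_le_mul_of_nonneg_left hns (by positivity)
    _ = n.factorial * M / R ^ n := by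
        rw [inv_pow]
        ring

lemma aux_iter_monomial (A : ℂ) (m : ℕ) :
    ∀ Δ : ℕ, iteratedDeriv Δ (fun z : ℂ => A * z ^ m)
      = fun z => A * (m.descFactorial Δ : ℂ) * z ^ (m - Δ)
  | 0 => by simp
  | (Δ + 1) => by
      rw [iteratedDeriv_succ, aux_iter_monomial A m Δ]
      funext z
      have hd : deriv (fun z : ℂ => A * (m.descFactorial Δ : ℂ) * z ^ (m - Δ)) z
          = A * (m.descFactorial Δ : ℂ) * ((m - Δ : ℕ) * z ^ (m - Δ - 1)) := by
        rw [deriv_const_mul _ (differentiable_pow _).differentiableAt, deriv_pow_field]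
      rw [hd, Nat.descFactorial_succ, Nat.cast_mul, Nat.sub_sub]
      ring

lemma aux_iter_sub {U : Set ℂ} (hU : IsOpen U) {f g : ℂ → ℂ}
    (hf : AnalyticOnNhd ℂ f U) (hg : AnalyticOnNhd ℂ g U) :
    ∀ n : ℕ, ∀ x ∈ U, iteratedDeriv n (fun z => f z - g z) x
      = iteratedDeriv n f x - iteratedDeriv n g x
  | 0 => by intro x hx; simp
  | (n + 1) => by
      intro x hx
      have hfn : AnalyticOnNhd ℂ (iteratedDeriv n f) U := by
        rw [iteratedDeriv_eq_iterate]; exact hf.iterated_deriv n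
      have hgn : AnalyticOnNhd ℂ (iteratedDeriv n g) U := by
        rw [iteratedDeriv_eq_iterate]; exact hg.iterated_deriv n
      rw [iteratedDeriv_succ, iteratedDeriv_succ, iteratedDeriv_succ]
      have hev : iteratedDeriv n (fun z => f z - g z)
          =ᶠ[nhds x] fun z => iteratedDeriv n f z - iteratedDeriv n g z := by
        filter_upwards [hU.mem_nhds hx] with z hz using aux_iter_sub hU hf hg n z hz
      rw [hev.deriv_eq]
      exact deriv_sub (hfn x hx).differentiableAt (hgn x hx).differentiableAt

set_option maxHeartbeats 1000000 in
/-- if `F = g/h` has nonpositive weight `k = k₁ - k₂ ≤ 0` and is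
regular at the cusp, then for `Δ` with `2Δ ≤ -k` or `Δ ≥ -k + 1`, the quantity
`(2πi)^{-Δ} F^{(Δ)}(it)` tends, as `t → 0⁺`, to `c(0)` when `k = 0` and `Δ = 0`,
and to `0` otherwise. -/
theorem stmt_12 (k₁ k₂ k : ℤ) (g h : ℂ → ℂ)
    (hg : IsModularForm k₁ g) (hh : IsModularForm k₂ h)
    (hhne : ∃ z : ℂ, 0 < z.im ∧ h z ≠ 0)
    (hk : k = k₁ - k₂) (hknp : k ≤ 0)
    (F : ℂ → ℂ) (hF : ∀ τ : ℂ, F τ = if 0 < τ.im then g τ / h τ else 0)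
    (T : ℝ) (hT : 0 < T) (c : ℕ → ℂ)
    (hcusp : ∀ τ : ℂ, T < τ.im → h τ ≠ 0 ∧
      Summable (fun n : ℕ => ‖c n * Complex.exp (2 * π * I * n * τ)‖) ∧
      F τ = ∑' n : ℕ, c n * Complex.exp (2 * π * I * n * τ))
    (Δ : ℕ) (hΔ : 2 * (Δ : ℤ) ≤ -k ∨ -k + 1 ≤ (Δ : ℤ)) :
    ∃ tstar : ℝ, 0 < tstar ∧
      (∀ t : ℝ, 0 < t → t < tstar →
        ∀ n : ℕ, DifferentiableAt ℂ (iteratedDeriv n F) ((t : ℂ) * I)) ∧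
      Tendsto (fun t : ℝ => ((2 * π * I : ℂ) ^ Δ)⁻¹ * iteratedDeriv Δ F ((t : ℂ) * I))
        (nhdsWithin 0 (Set.Ioi 0))
        (nhds (if k = 0 ∧ Δ = 0 then c 0 else 0)) := by

  have hπ : (0 : ℝ) < π := Real.pi_pos
  set m : ℕ := (-k).toNat with hmdef
  have hmk : (m : ℤ) = -k := Int.toNat_of_nonneg (by omega)
  set a : ℝ := 4 * π / 9 with ha
  have ha0 : 0 < a := by positivity
  have hT1 : (0 : ℝ) < T + 1 := by linarith
  set tstar : ℝ := 2 / (9 * (T + 1)) with htstar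
  have htstar0 : 0 < tstar := by positivity
  -- the open set U
  set U : Set ℂ := {z : ℂ | 0 < z.im ∧ (T + 1) * Complex.normSq z < z.im} with hUdef
  have hUopen : IsOpen U := by
    rw [hUdef, Set.setOf_and]
    exact (isOpen_lt continuous_const Complex.continuous_im).inter
      (isOpen_lt (continuous_const.mul Complex.continuous_normSq) Complex.continuous_im)
  have hUsub : U ⊆ {z : ℂ | 0 < z.im} := fun z hz => hz.1
  have hzne : ∀ z ∈ U, z ≠ 0 := by
    intro z hz h0
    rw [h0] at hz
    exact absurd hz.1 (by simp)
  have hnormSq : ∀ z ∈ U, 0 < Complex.normSq z := fun z hz =>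
    Complex.normSq_pos.mpr (hzne z hz)
  have hwim : ∀ z ∈ U, (-z⁻¹).im = z.im / Complex.normSq z := by
    intro z hz
    rw [Complex.neg_im, Complex.inv_im]
    field_simp
  have hwU : ∀ z ∈ U, T + 1 < (-z⁻¹).im := by
    intro z hz
    rw [hwim z hz, lt_div_iff₀ (hnormSq z hz)]
    exact hz.2
  have hwpos : ∀ z ∈ U, 0 < (-z⁻¹).im := fun z hz => lt_trans (by linarith) (hwU z hz)
  have hwT : ∀ z ∈ U, T < (-z⁻¹).im := fun z hz => lt_trans (by linarith) (hwU z hz)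
  have hhz : ∀ z ∈ U, h z ≠ 0 := by
    intro z hz h0
    have h1 := (hcusp _ (hwT z hz)).1
    apply h1
    rw [hh.2.2.1 z hz.1, h0, mul_zero]
  -- the q-expansion function
  set G : ℂ → ℂ := fun w => ∑' n : ℕ, c n * Complex.exp (2 * π * I * n * w) with hGdef
  have hFeq : ∀ z ∈ U, F z = z ^ m * G (-z⁻¹) := by
    intro z hz
    have hz0 : z ≠ 0 := hzne z hz
    have h1 : F (-z⁻¹) = G (-z⁻¹) := (hcusp _ (hwT z hz)).2.2
    have h2 : F (-z⁻¹) = g (-z⁻¹) / h (-z⁻¹) := by rw [hF, if_pos (hwpos z hz)]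
    have h5 : F z = g z / h z := by rw [hF, if_pos hz.1]
    have hzk : (z : ℂ) ^ (m : ℕ) = z ^ (-k) := by rw [← zpow_natCast, hmk]
    have hk2 : (z : ℂ) ^ k₂ ≠ 0 := zpow_ne_zero _ hz0
    rw [← h1, h2, hg.2.2.1 z hz.1, hh.2.2.1 z hz.1, h5, hzk]
    rw [mul_div_assoc', ← mul_assoc, ← zpow_add₀ hz0]
    rw [show -k + k₁ = k₂ by omega]
    rw [mul_div_mul_left _ _ hk2]
  -- norm of the exponential terms
  have hnorm : ∀ (n : ℕ) (w : ℂ), ‖c n * Complex.exp (2 * π * I * n * w)‖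
      = ‖c n‖ * Real.exp (-(2 * π * n * w.im)) := by
    intro n w
    rw [norm_mul]
    congr 1
    rw [Complex.norm_exp]
    congr 1
    have he : (2 * π * I * n * w) = ((2 * π * n : ℝ) : ℂ) * (I * w) := by push_cast; ring
    rw [he, Complex.re_ofReal_mul, Complex.I_mul_re]
    ring
  -- summability constants
  have hτ₀ : T < (((T + 1 : ℝ) : ℂ) * I).im := by simp
  have hsum₀ := (hcusp _ hτ₀).2.1
  have hsum₀' : Summable fun n : ℕ => ‖c n‖ * Real.exp (-(2 * π * n * (T + 1))) := by
    refine hsum₀.congr fun n => ?_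
    rw [hnorm]
    simp
  have hSsum : Summable fun n : ℕ => ‖c (n + 1)‖ * Real.exp (-(2 * π * (n + 1) * (T + 1))) := by
    have := (summable_nat_add_iff 1).2 hsum₀'
    refine this.congr fun n => ?_
    push_cast
    ring_nf
  set S : ℝ := ∑' n : ℕ, ‖c (n + 1)‖ * Real.exp (-(2 * π * (n + 1) * (T + 1))) with hSdef
  have hS0 : 0 ≤ S := tsum_nonneg fun n => by positivity
  set K : ℝ := Real.exp (2 * π * (T + 1)) * S with hKdef
  have hK0 : 0 ≤ K := by positivity
  -- tail bound
  have hGbound : ∀ w : ℂ, T + 1 ≤ w.im → ‖G w - c 0‖ ≤ K * Real.exp (-(2 * π) * w.im) := by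
    intro w hw
    have hwT' : T < w.im := by linarith
    have hsum := (hcusp w hwT').2.1
    have hsum' : Summable fun n : ℕ => c n * Complex.exp (2 * π * I * n * w) := hsum.of_norm
    have h0' : G w - c 0 = ∑' n : ℕ, c (n + 1) * Complex.exp (2 * π * I * (n + 1 : ℕ) * w) := by
      rw [hGdef]
      simp only
      rw [Summable.tsum_eq_zero_add hsum']
      simp
    rw [h0']
    have hsum1 : Summable fun n : ℕ => ‖c (n + 1) * Complex.exp (2 * π * I * (n + 1 : ℕ) * w)‖ :=
      (summable_nat_add_iff 1).2 hsum
    refine le_trans (norm_tsum_le_tsum_norm hsum1) ?_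
    have hterm : ∀ n : ℕ, ‖c (n + 1) * Complex.exp (2 * π * I * (n + 1 : ℕ) * w)‖ ≤
        (‖c (n + 1)‖ * Real.exp (-(2 * π * (n + 1) * (T + 1)))) *
          (Real.exp (2 * π * (T + 1)) * Real.exp (-(2 * π) * w.im)) := by
      intro n
      rw [hnorm (n + 1) w]
      push_cast
      calc ‖c (n + 1)‖ * Real.exp (-(2 * π * ((n : ℝ) + 1) * w.im))
          ≤ ‖c (n + 1)‖ * Real.exp (-(2 * π * ((n : ℝ) + 1) * (T + 1))
              + (2 * π * (T + 1) + -(2 * π) * w.im)) := by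
            apply mul_le_mul_of_nonneg_left _ (norm_nonneg _)
            rw [Real.exp_le_exp]
            have hn : (0 : ℝ) ≤ (n : ℝ) := Nat.cast_nonneg n
            nlinarith [mul_nonneg (mul_nonneg hπ.le hn) (sub_nonneg.2 hw)]
        _ = _ := by rw [Real.exp_add, Real.exp_add]; ring
    refine le_trans (Summable.tsum_le_tsum hterm hsum1 (hSsum.mul_right _)) ?_
    rw [tsum_mul_right]
    apply le_of_eq
    rw [hKdef]
    ring
  -- ball facts
  have hball : ∀ t : ℝ, 0 < t → t < tstar → ∀ z ∈ Metric.closedBall ((t : ℂ) * I) (t / 2),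
      z ∈ U ∧ ‖z‖ ≤ 3 * t / 2 ∧ 2 / (9 * t) ≤ (-z⁻¹).im := by
    intro t ht ht' z hzb
    have hd : ‖z - (t : ℂ) * I‖ ≤ t / 2 := by
      simpa [Metric.mem_closedBall, Complex.dist_eq] using hzb
    have him1 : |z.im - t| ≤ t / 2 := by
      have h1 := Complex.abs_im_le_norm (z - (t : ℂ) * I)
      simp only [Complex.sub_im, Complex.mul_im, Complex.ofReal_re, Complex.I_im,
        Complex.ofReal_im, Complex.I_re, mul_one, mul_zero, add_zero, zero_mul] at h1
      exact h1.trans hd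
    have him : t / 2 ≤ z.im := by
      have := abs_le.1 him1
      linarith [this.1]
    have habs : ‖z‖ ≤ 3 * t / 2 := by
      calc ‖z‖ = ‖z - (t : ℂ) * I + (t : ℂ) * I‖ := by ring_nf
        _ ≤ ‖z - (t : ℂ) * I‖ + ‖(t : ℂ) * I‖ := norm_add_le _ _
        _ ≤ t / 2 + t := by
            have : ‖(t : ℂ) * I‖ = t := by
              rw [norm_mul, Complex.norm_I, mul_one, Complex.norm_real]
              exact abs_of_pos ht
            rw [this]
            linarith
        _ = 3 * t / 2 := by ring
    have hnsq : Complex.normSq z ≤ 9 * t ^ 2 / 4 := by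
      rw [← Complex.sq_norm]
      have h0 : (0 : ℝ) ≤ ‖z‖ := norm_nonneg _
      have h4 : ‖z‖ ^ 2 ≤ (3 * t / 2) ^ 2 := by
        apply pow_le_pow_left₀ h0 habs
      calc ‖z‖ ^ 2 ≤ (3 * t / 2) ^ 2 := h4
        _ = 9 * t ^ 2 / 4 := by ring
    have h3 : 9 * (T + 1) * t < 2 := by
      rw [htstar, lt_div_iff₀ (by positivity)] at ht'
      linarith
    have hzU : z ∈ U := by
      constructor
      · linarith
      · have h1 : (T + 1) * Complex.normSq z ≤ (T + 1) * (9 * t ^ 2 / 4) := by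
          apply mul_le_mul_of_nonneg_left hnsq hT1.le
        have h2 : (T + 1) * (9 * t ^ 2 / 4) < t / 2 := by nlinarith
        linarith
    refine ⟨hzU, habs, ?_⟩
    rw [hwim z hzU, le_div_iff₀ (hnormSq z hzU)]
    calc 2 / (9 * t) * Complex.normSq z ≤ 2 / (9 * t) * (9 * t ^ 2 / 4) := by
          apply mul_le_mul_of_nonneg_left hnsq (by positivity)
      _ = t / 2 := by field_simp; ring
      _ ≤ z.im := him
  -- analyticity
  have hFU : DifferentiableOn ℂ F U := by
    have hgh : DifferentiableOn ℂ (fun z => g z / h z) U :=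
      DifferentiableOn.div (hg.1.mono hUsub) (hh.1.mono hUsub) (fun z hz => hhz z hz)
    exact hgh.congr fun z hz => by rw [hF, if_pos hz.1]
  have hFan : AnalyticOnNhd ℂ F U := hFU.analyticOnNhd hUopen
  set P : ℂ → ℂ := fun z => c 0 * z ^ m with hPdef
  have hPdiff : Differentiable ℂ P := (differentiable_pow m).const_mul _
  have hPan : AnalyticOnNhd ℂ P U := fun x _ => hPdiff.analyticAt x
  set Rf : ℂ → ℂ := fun z => F z - P z with hRdef
  have hRan : AnalyticOnNhd ℂ Rf U := fun x hx => (hFan x hx).sub (hPan x hx)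
  have hPiter : ∀ x : ℂ, iteratedDeriv Δ P x
      = c 0 * (m.descFactorial Δ : ℂ) * x ^ (m - Δ) := by
    intro x
    rw [hPdef, aux_iter_monomial (c 0) m Δ]
  have htIU : ∀ t : ℝ, 0 < t → t < tstar → (t : ℂ) * I ∈ U := by
    intro t ht ht'
    have h3 : 9 * (T + 1) * t < 2 := by
      rw [htstar, lt_div_iff₀ (by positivity)] at ht'
      linarith
    constructor
    · simpa using ht
    · have hn : Complex.normSq ((t : ℂ) * I) = t ^ 2 := by
        simp [Complex.normSq_apply]
        ring
      rw [hn]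
      have : ((t : ℂ) * I).im = t := by simp
      rw [this]
      nlinarith
  refine ⟨tstar, htstar0, ?_, ?_⟩
  · intro t ht ht' n
    have hzU := htIU t ht ht'
    have han : AnalyticOnNhd ℂ (iteratedDeriv n F) U := by
      rw [iteratedDeriv_eq_iterate]
      exact hFan.iterated_deriv n
    exact (han _ hzU).differentiableAt
  · -- the limit
    have hC'0 : 0 ≤ (Δ.factorial : ℝ) * (3 / 2) ^ m * K * 2 ^ Δ / a ^ Δ := by
      apply div_nonneg _ (by positivity)
      apply mul_nonneg (mul_nonneg (mul_nonneg (by positivity) (by positivity)) hK0) (by positivity)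
    set C' : ℝ := (Δ.factorial : ℝ) * (3 / 2) ^ m * K * 2 ^ Δ / a ^ Δ with hC'
    have hRbound : ∀ᶠ t : ℝ in nhdsWithin (0 : ℝ) (Set.Ioi 0),
        ‖iteratedDeriv Δ Rf ((t : ℂ) * I)‖
          ≤ C' * ((a * t⁻¹) ^ Δ * Real.exp (-(a * t⁻¹))) := by
      filter_upwards [Ioo_mem_nhdsGT (lt_min htstar0 one_pos)] with t ht
      obtain ⟨ht0, htm⟩ := ht
      have ht' : t < tstar := lt_of_lt_of_le htm (min_le_left _ _)
      have ht1 : t ≤ 1 := le_of_lt (lt_of_lt_of_le htm (min_le_right _ _))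
      have hsubU : Metric.closedBall ((t : ℂ) * I) (t / 2) ⊆ U :=
        fun z hz => (hball t ht0 ht' z hz).1
      have hdiff : DifferentiableOn ℂ Rf (Metric.closedBall ((t : ℂ) * I) (t / 2)) :=
        hRan.differentiableOn.mono hsubU
      have hMb : ∀ z ∈ Metric.closedBall ((t : ℂ) * I) (t / 2),
          ‖Rf z‖ ≤ (3 * t / 2) ^ m * (K * Real.exp (-(2 * π) * (2 / (9 * t)))) := by
        intro z hz
        obtain ⟨hzU, habs, hwim2⟩ := hball t ht0 ht' z hz
        have hzeq : Rf z = z ^ m * (G (-z⁻¹) - c 0) := by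
          rw [hRdef]
          simp only
          rw [hFeq z hzU, hPdef]
          ring
        rw [hzeq, norm_mul, norm_pow]
        have h1 : ‖z‖ ^ m ≤ (3 * t / 2) ^ m := pow_le_pow_left₀ (norm_nonneg _) habs m
        have h2 : ‖G (-z⁻¹) - c 0‖ ≤ K * Real.exp (-(2 * π) * (-z⁻¹).im) :=
          hGbound _ (hwU z hzU).le
        have h3 : Real.exp (-(2 * π) * (-z⁻¹).im) ≤ Real.exp (-(2 * π) * (2 / (9 * t))) := by
          rw [Real.exp_le_exp]
          nlinarith
        apply mul_le_mul h1 (h2.trans (mul_le_mul_of_nonneg_left h3 hK0)) (norm_nonneg _)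
          (by positivity)
      have hC := aux_cauchy_bound (by positivity : (0:ℝ) < t / 2) hdiff hMb Δ
      refine hC.trans ?_
      have hexp : -(2 * π) * (2 / (9 * t)) = -(a * t⁻¹) := by
        rw [ha]
        field_simp
        ring
      have heq : (Δ.factorial : ℝ) * ((3 * t / 2) ^ m * (K * Real.exp (-(2 * π) * (2 / (9 * t)))))
          / (t / 2) ^ Δ
          = (C' * ((a * t⁻¹) ^ Δ * Real.exp (-(a * t⁻¹)))) * t ^ m := by
        rw [hexp, hC']
        field_simp
        have e1 : t ^ Δ * t⁻¹ ^ Δ = 1 := by rw [← mul_pow, mul_inv_cancel₀ ht0.ne', one_pow]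
        have e2 : (1 / 2 : ℝ) ^ Δ * 2 ^ Δ = 1 := by rw [← mul_pow]; norm_num
        linear_combination (-(t ^ m * K * a ^ Δ * (3 / 2) ^ m) * ((1 / 2 : ℝ) ^ Δ * 2 ^ Δ)) * e1
          + (-(t ^ m * K * a ^ Δ * (3 / 2) ^ m)) * e2
      rw [heq]
      have hx0 : 0 ≤ C' * ((a * t⁻¹) ^ Δ * Real.exp (-(a * t⁻¹))) :=
        mul_nonneg hC'0 (by positivity)
      have htm1 : t ^ m ≤ 1 := pow_le_one₀ ht0.le ht1
      exact mul_le_of_le_one_right hx0 htm1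
    have hbnd0 : Tendsto (fun t : ℝ => C' * ((a * t⁻¹) ^ Δ * Real.exp (-(a * t⁻¹))))
        (nhdsWithin (0 : ℝ) (Set.Ioi 0)) (nhds 0) := by
      have h1 : Tendsto (fun u : ℝ => u ^ Δ * Real.exp (-u)) atTop (nhds 0) :=
        tendsto_pow_mul_exp_neg_atTop_nhds_zero Δ
      have h2 : Tendsto (fun t : ℝ => a * t⁻¹) (nhdsWithin (0 : ℝ) (Set.Ioi 0)) atTop :=
        tendsto_inv_nhdsGT_zero.const_mul_atTop ha0
      have h3 := (h1.comp h2).const_mul C'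
      simpa using h3
    have hRtend : Tendsto (fun t : ℝ => iteratedDeriv Δ Rf ((t : ℂ) * I))
        (nhdsWithin (0 : ℝ) (Set.Ioi 0)) (nhds 0) :=
      squeeze_zero_norm' hRbound hbnd0
    have hPtend : Tendsto (fun t : ℝ => iteratedDeriv Δ P ((t : ℂ) * I))
        (nhdsWithin (0 : ℝ) (Set.Ioi 0)) (nhds (if k = 0 ∧ Δ = 0 then c 0 else 0)) := by
      simp only [hPiter]
      split_ifs with hcase
      · obtain ⟨hk0, hΔ0⟩ := hcase
        have hm0 : m = 0 := by omega
        subst hΔ0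
        simp [hm0]
      · rcases lt_or_ge m Δ with hlt | hge
        · have hdf : m.descFactorial Δ = 0 := Nat.descFactorial_eq_zero_iff_lt.mpr hlt
          simp [hdf]
        · have hΔm : Δ < m := by omega
          have h1 : Tendsto (fun t : ℝ => ((t : ℂ) * I)) (nhdsWithin (0 : ℝ) (Set.Ioi 0))
              (nhds 0) := by
            have h0 := (Complex.continuous_ofReal.tendsto (0 : ℝ)).mono_left
              (nhdsWithin_le_nhds (s := Set.Ioi (0:ℝ)))
            have := h0.mul_const I
            simpa using this
          have h2 := h1.pow (m - Δ)
          rw [zero_pow (by omega : m - Δ ≠ 0)] at h2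
          have h4 := h2.const_mul (c 0 * (m.descFactorial Δ : ℂ))
          rw [mul_zero] at h4
          exact h4
    have hFsplit : ∀ᶠ t : ℝ in nhdsWithin (0 : ℝ) (Set.Ioi 0),
        iteratedDeriv Δ P ((t : ℂ) * I) + iteratedDeriv Δ Rf ((t : ℂ) * I)
          = iteratedDeriv Δ F ((t : ℂ) * I) := by
      filter_upwards [Ioo_mem_nhdsGT htstar0] with t ht
      have hzU := htIU t ht.1 ht.2
      have hsub := aux_iter_sub hUopen hFan hPan Δ _ hzU
      have : iteratedDeriv Δ Rf ((t : ℂ) * I)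
          = iteratedDeriv Δ F ((t : ℂ) * I) - iteratedDeriv Δ P ((t : ℂ) * I) := hsub
      rw [this]
      ring
    have hsum := hPtend.add hRtend
    rw [add_zero] at hsum
    have hmain : Tendsto (fun t : ℝ => iteratedDeriv Δ F ((t : ℂ) * I))
        (nhdsWithin (0 : ℝ) (Set.Ioi 0)) (nhds (if k = 0 ∧ Δ = 0 then c 0 else 0)) :=
      hsum.congr' hFsplit
    have hfin := hmain.const_mul (((2 * π * I : ℂ) ^ Δ)⁻¹)
    have heq2 : (((2 * π * I : ℂ) ^ Δ)⁻¹ * if k = 0 ∧ Δ = 0 then c 0 else 0)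
        = (if k = 0 ∧ Δ = 0 then c 0 else 0) := by
      split_ifs with hcase
      · rw [hcase.2]
        simp
      · exact mul_zero _
    rw [heq2] at hfin
    exact hfin
end

section
/- For every s ∈ ℂ with Re(s) > 2, the series Σ_{n≥1} σ₁(n) e^{−2πnt} converges absolutely for each t > 0, the integral ∫₀^∞ t^{s−1} (Σ_{n≥1} σ₁(n) e^{−2πnt}) dt converges absolutely, and ∫₀^∞ t^{s−1} (Σ_{n≥1} σ₁(n) e^{−2πnt}) dt = (2π)^{−s} Γ(s) ζ(s) ζ(s−1). -/
open Complex Real Filter Topology MeasureTheory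

open Set in
/-- Integrability of a tsum given integrability of terms and summability of integrals of norms. -/
lemma my_integrable_tsum {μ : MeasureTheory.Measure ℝ} {F : ℕ → ℝ → ℂ}
    (hF_int : ∀ i, Integrable (F i) μ)
    (hF_sum : Summable fun i ↦ ∫ a, ‖F i a‖ ∂μ) :
    Integrable (fun a ↦ ∑' i, F i a) μ := by
  have hf'' : ∀ i, AEMeasurable (fun x ↦ (‖F i x‖₊ : ENNReal)) μ :=
    fun i ↦ (hF_int i).1.enorm
  have htop : ∑' i, ∫⁻ a, ‖F i a‖₊ ∂μ ≠ ⊤ := by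
    have key : ∀ i, ∫⁻ a, ‖F i a‖₊ ∂μ = ENNReal.ofReal (∫ a, ‖F i a‖ ∂μ) := fun i ↦
      (MeasureTheory.ofReal_integral_norm_eq_lintegral_enorm (hF_int i)).symm
    have hnn : Summable (fun i ↦ (∫ a, ‖F i a‖ ∂μ).toNNReal) := by
      rw [← NNReal.summable_coe]
      refine hF_sum.congr fun i ↦ ?_
      rw [Real.coe_toNNReal _ (integral_nonneg fun a ↦ norm_nonneg _)]
    simp only [funext key, ENNReal.ofReal]
    rw [← ENNReal.coe_tsum hnn]
    exact ENNReal.coe_ne_top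
  have hhh : ∀ᵐ a ∂μ, Summable fun n ↦ (‖F n a‖₊ : ℝ) := by
    rw [← MeasureTheory.lintegral_tsum hf''] at htop
    refine (MeasureTheory.ae_lt_top' (AEMeasurable.ennreal_tsum hf'')
      htop).mono fun x hx ↦ ?_
    rw [← ENNReal.tsum_coe_ne_top_iff_summable_coe]
    exact hx.ne
  constructor
  · refine aestronglyMeasurable_of_tendsto_ae (f := fun N a ↦ ∑ i ∈ Finset.range N, F i a)
      atTop (fun N ↦ ?_) ?_
    · exact Finset.aestronglyMeasurable_fun_sum _ fun i _ ↦ (hF_int i).1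
    · filter_upwards [hhh] with a ha
      exact ((Summable.of_norm (by simpa [← coe_nnnorm] using ha)).hasSum).tendsto_sum_nat
  · show (∫⁻ a, ‖∑' i, F i a‖₊ ∂μ) < ⊤
    have bound : ∀ᵐ a ∂μ, (‖∑' i, F i a‖₊ : ENNReal) ≤ ∑' i, (‖F i a‖₊ : ENNReal) := by
      filter_upwards [hhh] with a ha
      have ha' : Summable fun i ↦ ‖F i a‖₊ := NNReal.summable_coe.mp ha
      calc (‖∑' i, F i a‖₊ : ENNReal)
          ≤ ((∑' i, ‖F i a‖₊ : NNReal) : ENNReal) := ENNReal.coe_le_coe.mpr (nnnorm_tsum_le ha')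
        _ = ∑' i, (‖F i a‖₊ : ENNReal) := ENNReal.coe_tsum ha'
    refine lt_of_le_of_lt (MeasureTheory.lintegral_mono_ae bound) ?_
    rw [MeasureTheory.lintegral_tsum hf'']
    exact lt_top_iff_ne_top.mpr htop

open Set in
lemma my_term_integrable {a : ℂ} {p : ℝ} {s : ℂ} (hs : 0 < s.re) (hpi : 0 < p) :
    IntegrableOn (fun t : ℝ ↦ (t : ℂ) ^ (s - 1) * (a * rexp (-p * t))) (Ioi 0) := by
  simp_rw [← mul_assoc, mul_comm _ a, mul_assoc]
  have := Complex.GammaIntegral_convergent hs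
  rw [← mul_zero p, ← integrableOn_Ioi_comp_mul_left_iff _ _ hpi] at this
  refine (IntegrableOn.congr_fun (this.const_mul (1 / (p : ℂ) ^ (s - 1)))
    (fun t (ht : 0 < t) ↦ ?_) measurableSet_Ioi).const_mul _
  simp_rw [mul_comm (Complex.ofReal (rexp _)), ← mul_assoc, neg_mul, ofReal_mul]
  rw [mul_cpow_ofReal_nonneg hpi.le ht.le, ← mul_assoc, one_div, inv_mul_cancel₀, one_mul]
  rw [Ne, cpow_eq_zero_iff, not_and_or]
  exact Or.inl (ofReal_ne_zero.mpr hpi.ne')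

open Set in
lemma my_norm_sum {a : ℕ → ℂ} {p : ℕ → ℝ} {s : ℂ} (hp : ∀ i, 0 < p i) (hs : 0 < s.re)
    (h_sum : Summable fun i ↦ ‖a i‖ / (p i) ^ s.re) :
    Summable fun i ↦ ∫ t in Ioi (0 : ℝ), ‖(t : ℂ) ^ (s - 1) * (a i * rexp (-p i * t))‖ := by
  apply Summable.of_norm
  convert h_sum.mul_left (Real.Gamma s.re) using 2 with i
  · rfl
  simp_rw [← mul_assoc, mul_comm _ (a i), mul_assoc, norm_mul (a i), integral_const_mul]
  rw [← mul_div_assoc, mul_comm (Real.Gamma _), mul_div_assoc, norm_mul ‖a i‖, norm_norm]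
  have hpi := hp i
  congr 1
  have := Real.integral_rpow_mul_exp_neg_mul_Ioi hs hpi
  simp_rw [← neg_mul (p i), one_div, inv_rpow hpi.le, ← div_eq_inv_mul] at this
  rw [norm_of_nonneg (integral_nonneg (fun _ ↦ norm_nonneg _)), ← this]
  refine setIntegral_congr_fun measurableSet_Ioi (fun t ht ↦ ?_)
  rw [norm_mul, norm_real, Real.norm_eq_abs, Real.abs_exp, 
    norm_cpow_eq_rpow_re_of_pos ht, sub_re, one_re]

open ArithmeticFunction ArithmeticFunction.zeta LSeries.notation in
lemma sigma_LSeriesHasSum (s : ℂ) (hs : 2 < s.re) :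
    LSeriesHasSum (fun n : ℕ ↦ ((ArithmeticFunction.sigma 1 n : ℕ) : ℂ)) s
      (riemannZeta s * riemannZeta (s - 1)) := by
  have hs1 : 1 < s.re := by linarith
  have hs2 : 1 < (s - 1).re := by
    simp only [Complex.sub_re, Complex.one_re]; linarith
  have hζ : LSeriesHasSum (↗(ζ : ArithmeticFunction ℕ)) s (riemannZeta s) := LSeriesHasSum_zeta hs1
  have hζ' : LSeriesHasSum (↗(ζ : ArithmeticFunction ℕ)) (s - 1) (riemannZeta (s - 1)) :=
    LSeriesHasSum_zeta hs2
  have hpow : LSeriesHasSum (↗(((pow 1 : ArithmeticFunction ℕ) : ArithmeticFunction ℂ))) s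
      (riemannZeta (s - 1)) := by
    have heq : LSeries.term (↗(((pow 1 : ArithmeticFunction ℕ) : ArithmeticFunction ℂ))) s =
        LSeries.term (↗(ζ : ArithmeticFunction ℕ)) (s - 1) := by
      funext n
      rcases eq_or_ne n 0 with rfl | hn
      · simp [LSeries.term_zero]
      · rw [LSeries.term_of_ne_zero hn, LSeries.term_of_ne_zero hn]
        have hn' : (n : ℂ) ≠ 0 := Nat.cast_ne_zero.mpr hn
        rw [natCoe_apply, pow_apply, zeta_apply_ne hn, if_neg (by simp [hn])]
        rw [Complex.cpow_sub _ _ hn', Complex.cpow_one]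
        push_cast
        rw [pow_one, one_div_div]
    unfold LSeriesHasSum at hζ' ⊢
    rwa [heq]
  have hζ2 : LSeriesHasSum (↗(((ζ : ArithmeticFunction ℕ) : ArithmeticFunction ℂ))) s
      (riemannZeta s) := by
    have : (↗(((ζ : ArithmeticFunction ℕ) : ArithmeticFunction ℂ))) =
        (↗(ζ : ArithmeticFunction ℕ)) := funext fun n ↦ by simp [natCoe_apply]
    exact this ▸ hζ
  have hmul := LSeriesHasSum_mul hζ2 hpow
  rw [← natCoe_mul, zeta_mul_pow_eq_sigma] at hmul
  have : (fun n : ℕ ↦ ((ArithmeticFunction.sigma 1 n : ℕ) : ℂ)) =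
      (↗(((ArithmeticFunction.sigma 1 : ArithmeticFunction ℕ) : ArithmeticFunction ℂ))) :=
    funext fun n ↦ by simp [natCoe_apply]
  exact this ▸ hmul

lemma sigma_le (m : ℕ) : ArithmeticFunction.sigma 1 m ≤ m * m := by
  rw [ArithmeticFunction.sigma_one_apply]
  have hsub : m.divisors ⊆ Finset.Icc 1 m := by
    intro d hd
    rw [Finset.mem_Icc]
    exact ⟨Nat.one_le_iff_ne_zero.mpr (Nat.pos_of_mem_divisors hd).ne',
      Nat.divisor_le hd⟩
  calc ∑ d ∈ m.divisors, d ≤ ∑ d ∈ m.divisors, m :=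
        Finset.sum_le_sum fun d hd ↦ Nat.divisor_le hd
    _ = m.divisors.card * m := by rw [Finset.sum_const, smul_eq_mul]
    _ ≤ m * m := by
        refine Nat.mul_le_mul_right _ ?_
        calc m.divisors.card ≤ (Finset.Icc 1 m).card := Finset.card_le_card hsub
          _ = m := by rw [Nat.card_Icc]; omega

/-- the Mellin transform of the Lambert-type series
`Σ_{n≥1} σ₁(n) e^{-2πnt}` equals `(2π)^{-s} Γ(s) ζ(s) ζ(s-1)` for `Re s > 2`,
with the series and the integral converging absolutely. -/
theorem stmt_16 (s : ℂ) (hs : 2 < s.re) :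
    (∀ t : ℝ, 0 < t → Summable (fun n : ℕ =>
      ‖((∑ dd ∈ (n + 1).divisors, dd : ℕ) : ℂ) *
        Complex.exp (-(2 * π * ((n : ℝ) + 1) * t))‖)) ∧
    MeasureTheory.IntegrableOn (fun t : ℝ =>
      (t : ℂ) ^ (s - 1) * ∑' n : ℕ, ((∑ dd ∈ (n + 1).divisors, dd : ℕ) : ℂ) *
        Complex.exp (-(2 * π * ((n : ℝ) + 1) * t))) (Set.Ioi 0) ∧
    ∫ t in Set.Ioi (0 : ℝ),
        (t : ℂ) ^ (s - 1) * ∑' n : ℕ, ((∑ dd ∈ (n + 1).divisors, dd : ℕ) : ℂ) *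
          Complex.exp (-(2 * π * ((n : ℝ) + 1) * t))
      = (2 * π : ℂ) ^ (-s) * Complex.Gamma s * riemannZeta s * riemannZeta (s - 1) := by
  have hs0 : 0 < s.re := by linarith
  set a : ℕ → ℂ := fun n ↦ ((ArithmeticFunction.sigma 1 (n + 1) : ℕ) : ℂ) with ha_def
  set p : ℕ → ℝ := fun n ↦ 2 * π * ((n : ℝ) + 1) with hp_def
  have hp_pos : ∀ n, 0 < p n := fun n ↦ by
    have : (0:ℝ) < (n : ℝ) + 1 := by positivity
    positivity
  -- rewrite the statement's terms
  have hterm : ∀ (n : ℕ) (t : ℝ),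
      ((∑ dd ∈ (n + 1).divisors, dd : ℕ) : ℂ) *
        Complex.exp (-(2 * π * ((n : ℝ) + 1) * t)) = a n * ↑(rexp (-p n * t)) := by
    intro n t
    congr 1
    · simp [ha_def, ArithmeticFunction.sigma_one_apply]
    · rw [Complex.ofReal_exp]
      congr 1
      push_cast [hp_def]
      ring
  -- pointwise summability of norms
  have hsummable : ∀ t : ℝ, 0 < t → Summable (fun n : ℕ ↦
      ‖((∑ dd ∈ (n + 1).divisors, dd : ℕ) : ℂ) *
        Complex.exp (-(2 * π * ((n : ℝ) + 1) * t))‖) := by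
    intro t ht
    simp_rw [hterm]
    have hnorm : ∀ n : ℕ, ‖a n * (↑(rexp (-p n * t)) : ℂ)‖ =
        (ArithmeticFunction.sigma 1 (n + 1) : ℝ) * rexp (-p n * t) := by
      intro n
      rw [norm_mul, Complex.norm_real, Real.norm_of_nonneg (Real.exp_nonneg _), ha_def]
      simp
    simp_rw [hnorm]
    set r : ℝ := rexp (-(2 * π * t)) with hr_def
    have hr0 : 0 ≤ r := Real.exp_nonneg _
    have hr1 : r < 1 := by
      rw [hr_def, Real.exp_lt_one_iff]
      have : (0:ℝ) < 2 * π * t := by positivity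
      linarith
    have hgeom : Summable (fun n : ℕ ↦ ((n : ℝ) + 1) ^ 2 * r ^ (n + 1)) := by
      have := summable_pow_mul_geometric_of_norm_lt_one (R := ℝ) 2
        (r := r) (by rwa [Real.norm_of_nonneg hr0])
      have h2 := (summable_nat_add_iff 1).mpr this
      refine h2.congr fun n ↦ ?_
      push_cast
      ring
    refine Summable.of_nonneg_of_le (fun n ↦ by positivity) (fun n ↦ ?_) hgeom
    have hexp : rexp (-p n * t) = r ^ (n + 1) := by
      rw [hr_def, ← Real.exp_nat_mul]
      congr 1
      rw [hp_def]
      push_cast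
      ring
    rw [hexp]
    refine mul_le_mul_of_nonneg_right ?_ (by positivity)
    have := sigma_le (n + 1)
    calc (ArithmeticFunction.sigma 1 (n + 1) : ℝ) ≤ ((n + 1) * (n + 1) : ℕ) := by
          exact_mod_cast this
      _ = ((n : ℝ) + 1) ^ 2 := by push_cast; ring
  -- key summability for the Mellin machinery
  have hσre : Summable (fun n : ℕ ↦ (ArithmeticFunction.sigma 1 n : ℝ) / (n : ℝ) ^ s.re) := by
    have h := (sigma_LSeriesHasSum (s.re : ℂ) (by simpa using hs)).summable
    have heq : LSeries.term (fun n : ℕ ↦ ((ArithmeticFunction.sigma 1 n : ℕ) : ℂ)) (s.re : ℂ) =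
        fun n : ℕ ↦ (((ArithmeticFunction.sigma 1 n : ℝ) / (n : ℝ) ^ s.re : ℝ) : ℂ) := by
      funext n
      rcases eq_or_ne n 0 with rfl | hn
      · simp [LSeries.term_zero]
      · rw [LSeries.term_of_ne_zero hn]
        rw [show ((n : ℂ) : ℂ) ^ (s.re : ℂ) = (((n : ℝ) ^ s.re : ℝ) : ℂ) by
          rw [Complex.ofReal_cpow (Nat.cast_nonneg n)]; push_cast; ring]
        push_cast
        ring
    rw [heq] at h
    exact Complex.summable_ofReal.mp h
  have h_sum : Summable fun n : ℕ ↦ ‖a n‖ / (p n) ^ s.re := by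
    have h1 := (summable_nat_add_iff 1).mpr hσre
    have h2 := h1.mul_left (((2 * π) ^ s.re)⁻¹)
    refine h2.congr fun n ↦ ?_
    have h2π : (0:ℝ) ≤ 2 * π := by positivity
    have hn1 : (0:ℝ) ≤ (n : ℝ) + 1 := by positivity
    rw [ha_def, hp_def]
    simp only
    rw [Real.mul_rpow h2π hn1, Complex.norm_natCast]
    push_cast
    ring
  have hF : ∀ t ∈ Set.Ioi (0:ℝ), HasSum (fun n : ℕ ↦ a n * ↑(rexp (-p n * t)))
      (∑' n : ℕ, ((∑ dd ∈ (n + 1).divisors, dd : ℕ) : ℂ) *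
        Complex.exp (-(2 * π * ((n : ℝ) + 1) * t))) := by
    intro t ht
    have h1 := ((hsummable t ht).of_norm).hasSum
    refine HasSum.congr_fun ?_ (fun n ↦ (hterm n t).symm)
    exact h1
  have hterm_int : ∀ n : ℕ, MeasureTheory.IntegrableOn
      (fun t : ℝ ↦ (t : ℂ) ^ (s - 1) * (a n * ↑(rexp (-p n * t)))) (Set.Ioi 0) :=
    fun n ↦ my_term_integrable hs0 (hp_pos n)
  have hnorm_sum := my_norm_sum hp_pos hs0 h_sum
  have hmellin := hasSum_mellin (a := a) (p := p) (F := fun t : ℝ ↦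
      ∑' n : ℕ, ((∑ dd ∈ (n + 1).divisors, dd : ℕ) : ℂ) *
        Complex.exp (-(2 * π * ((n : ℝ) + 1) * t)))
    (fun i ↦ Or.inr (hp_pos i)) hs0 hF h_sum
  have hfun_eq : (fun t : ℝ ↦ (t : ℂ) ^ (s - 1) * ∑' n : ℕ,
      ((∑ dd ∈ (n + 1).divisors, dd : ℕ) : ℂ) *
        Complex.exp (-(2 * π * ((n : ℝ) + 1) * t))) =
      fun t : ℝ ↦ ∑' n : ℕ, (t : ℂ) ^ (s - 1) * (a n * ↑(rexp (-p n * t))) := by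
    funext t
    rw [tsum_mul_left]
    congr 1
    exact tsum_congr fun n ↦ hterm n t
  refine ⟨hsummable, ?_, ?_⟩
  · rw [hfun_eq]
    exact my_integrable_tsum (fun n ↦ hterm_int n) hnorm_sum
  · -- the value
    have hζζ : HasSum (fun n : ℕ ↦ a n / ((n : ℂ) + 1) ^ s)
        (riemannZeta s * riemannZeta (s - 1)) := by
      have h := sigma_LSeriesHasSum s hs
      have h1 := (hasSum_nat_add_iff' 1).mpr h
      simp only [Finset.range_one, Finset.sum_singleton, LSeries.term_zero, sub_zero] at h1
      refine h1.congr_fun fun n ↦ ?_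
      rw [LSeries.term_of_ne_zero (Nat.succ_ne_zero n)]
      rw [ha_def]
      push_cast
      ring
    have hval : HasSum (fun n : ℕ ↦ Complex.Gamma s * a n / (p n : ℂ) ^ s)
        ((2 * π : ℂ) ^ (-s) * Complex.Gamma s * (riemannZeta s * riemannZeta (s - 1))) := by
      have h2 := hζζ.mul_left ((2 * π : ℂ) ^ (-s) * Complex.Gamma s)
      refine h2.congr_fun fun n ↦ ?_
      have h2π : (0:ℝ) ≤ 2 * π := by positivity
      have hn1 : (0:ℝ) ≤ (n : ℝ) + 1 := by positivity
      have hpn : ((p n : ℝ) : ℂ) = ((2 * π : ℝ) : ℂ) * (((n : ℝ) + 1 : ℝ) : ℂ) := by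
        rw [hp_def]; push_cast; ring
      have hcast : ((2 * π : ℝ) : ℂ) = (2 * π : ℂ) := by push_cast; ring
      have hcast2 : (((n : ℝ) + 1 : ℝ) : ℂ) = (n : ℂ) + 1 := by push_cast; ring
      have hne1 : (2 * π : ℂ) ^ s ≠ 0 := by
        intro h0
        rcases (Complex.cpow_eq_zero_iff _ _).mp h0 with ⟨h1, -⟩
        rw [← hcast] at h1
        exact Complex.ofReal_ne_zero.mpr (by positivity) h1
      have hne2 : ((n : ℂ) + 1) ^ s ≠ 0 := by
        intro h0
        rcases (Complex.cpow_eq_zero_iff _ _).mp h0 with ⟨h1, -⟩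
        rw [← hcast2] at h1
        exact Complex.ofReal_ne_zero.mpr (by positivity) h1
      rw [hpn, mul_cpow_ofReal_nonneg h2π hn1, hcast, hcast2, Complex.cpow_neg]
      field_simp
    have hme : mellin (fun t : ℝ ↦ ∑' n : ℕ, ((∑ dd ∈ (n + 1).divisors, dd : ℕ) : ℂ) *
        Complex.exp (-(2 * π * ((n : ℝ) + 1) * t))) s
        = (2 * π : ℂ) ^ (-s) * Complex.Gamma s * (riemannZeta s * riemannZeta (s - 1)) :=
      hmellin.unique hval
    rw [show (∫ t in Set.Ioi (0 : ℝ),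
        (t : ℂ) ^ (s - 1) * ∑' n : ℕ, ((∑ dd ∈ (n + 1).divisors, dd : ℕ) : ℂ) *
          Complex.exp (-(2 * π * ((n : ℝ) + 1) * t)))
        = mellin (fun t : ℝ ↦ ∑' n : ℕ, ((∑ dd ∈ (n + 1).divisors, dd : ℕ) : ℂ) *
          Complex.exp (-(2 * π * ((n : ℝ) + 1) * t))) s by
      simp only [mellin, smul_eq_mul]]
    rw [hme]
    ring
end
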